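/- arXiv:1906.04552 — 8 statements merged into one kernel-verified Lean document; each statement's English description precedes it below -/
import Mathlib

section
/- Let J be a Jordan algebra over a field F with center C(J) = {0}, and suppose J = J₁ ⊕ J₂ is the internal direct sum of two ideals J₁ and J₂. Then every derivation D of J satisfies D(J₁) ⊆ J₁ and D(J₂) ⊆ J₂. -/
/-- If a Jordan algebra `J` over a field `F` has trivial center and
is the internal direct sum of two ideals `J₁ ⊕ J₂`, then every derivation of `J`
preserves `J₁` and `J₂`. -/
theorem derivation_preserves_ideals_of_direct_sum
    {F J : Type*} [Field F] [AddCommGroup J] [Module F J]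
    (mul : J →ₗ[F] J →ₗ[F] J)
    (comm : ∀ x y : J, mul x y = mul y x)
    (jordan : ∀ x y : J, mul (mul (mul x x) y) x = mul (mul x x) (mul x y))
    (hcenter : ∀ a : J,
      (∀ x y : J, mul (mul a x) y = mul (mul a y) x ∧ mul (mul a x) y = mul (mul x y) a)
        → a = 0)
    (J₁ J₂ : Submodule F J)
    (hJ₁ : ∀ x : J, ∀ a ∈ J₁, mul x a ∈ J₁)
    (hJ₂ : ∀ x : J, ∀ a ∈ J₂, mul x a ∈ J₂)
    (hdisj : J₁ ⊓ J₂ = ⊥)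
    (hsum : J₁ ⊔ J₂ = ⊤)
    (D : J →ₗ[F] J)
    (hD : ∀ x y : J, D (mul x y) = mul (D x) y + mul x (D y)) :
    (∀ a ∈ J₁, D a ∈ J₁) ∧ (∀ a ∈ J₂, D a ∈ J₂) := by
  -- products of J₁ and J₂ vanish
  have hzero : ∀ x ∈ J₁, ∀ y ∈ J₂, mul x y = 0 := by
    intro x hx y hy
    have h1 : mul x y ∈ J₁ := by rw [comm]; exact hJ₁ y x hx
    have h2 : mul x y ∈ J₂ := hJ₂ x y hy
    have : mul x y ∈ J₁ ⊓ J₂ := ⟨h1, h2⟩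
    rwa [hdisj, Submodule.mem_bot] at this
  -- an element annihilating everything is central, hence zero
  have hkill : ∀ b : J, (∀ z : J, mul b z = 0) → b = 0 := by
    intro b hb
    apply hcenter
    intro x y
    have h0 : ∀ w : J, mul (0 : J) w = 0 := by
      intro w; simp
    constructor
    · rw [hb x, hb y, h0, h0]
    · rw [hb x, h0, comm, hb]
  -- D of mixed products split
  have hDzero : ∀ x ∈ J₁, ∀ y ∈ J₂, mul (D x) y = 0 ∧ mul x (D y) = 0 := by
    intro x hx y hy
    have h0 : D (mul x y) = 0 := by rw [hzero x hx y hy, map_zero]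
    have hsum0 : mul (D x) y + mul x (D y) = 0 := by rw [← hD, h0]
    have h2 : mul (D x) y ∈ J₂ := hJ₂ _ y hy
    have h1 : mul (D x) y ∈ J₁ := by
      have : mul (D x) y = -(mul x (D y)) := by
        rw [eq_neg_iff_add_eq_zero]; exact hsum0
      rw [this]
      exact Submodule.neg_mem _ (by rw [comm]; exact hJ₁ _ x hx)
    have hz : mul (D x) y = 0 := by
      have : mul (D x) y ∈ J₁ ⊓ J₂ := ⟨h1, h2⟩
      rwa [hdisj, Submodule.mem_bot] at this
    refine ⟨hz, ?_⟩
    have := hsum0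
    rw [hz, zero_add] at this
    exact this
  constructor
  · intro a ha
    obtain ⟨b₁, hb₁, b₂, hb₂, hab⟩ := Submodule.mem_sup.mp
      (by rw [hsum]; exact Submodule.mem_top : D a ∈ J₁ ⊔ J₂)
    have hb₂0 : b₂ = 0 := by
      apply hkill
      intro z
      obtain ⟨z₁, hz₁, z₂, hz₂, hz⟩ := Submodule.mem_sup.mp
        (by rw [hsum]; exact Submodule.mem_top : z ∈ J₁ ⊔ J₂)
      have e1 : mul b₂ z₁ = 0 := by rw [comm]; exact hzero z₁ hz₁ b₂ hb₂
      have eDa : mul (D a) z₂ = 0 := (hDzero a ha z₂ hz₂).1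
      have e2 : mul b₂ z₂ = 0 := by
        have : mul b₁ z₂ + mul b₂ z₂ = 0 := by
          have : mul (b₁ + b₂) z₂ = 0 := by rw [hab]; exact eDa
          simpa [map_add] using this
        have e3 : mul b₁ z₂ = 0 := hzero b₁ hb₁ z₂ hz₂
        rw [e3, zero_add] at this
        exact this
      calc mul b₂ z = mul b₂ (z₁ + z₂) := by rw [hz]
        _ = mul b₂ z₁ + mul b₂ z₂ := by simp [map_add]
        _ = 0 := by rw [e1, e2, add_zero]
    rw [← hab, hb₂0, add_zero]
    exact hb₁
  · intro a ha
    obtain ⟨b₁, hb₁, b₂, hb₂, hab⟩ := Submodule.mem_sup.mp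
      (by rw [hsum]; exact Submodule.mem_top : D a ∈ J₁ ⊔ J₂)
    have hb₁0 : b₁ = 0 := by
      apply hkill
      intro z
      obtain ⟨z₁, hz₁, z₂, hz₂, hz⟩ := Submodule.mem_sup.mp
        (by rw [hsum]; exact Submodule.mem_top : z ∈ J₁ ⊔ J₂)
      have e1 : mul b₁ z₂ = 0 := hzero b₁ hb₁ z₂ hz₂
      have eDa : mul z₁ (D a) = 0 := (hDzero z₁ hz₁ a ha).2
      have e2 : mul b₁ z₁ = 0 := by
        have h : mul b₁ z₁ + mul b₂ z₁ = 0 := by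
          have : mul (b₁ + b₂) z₁ = 0 := by
            rw [hab, comm]; exact eDa
          simpa [map_add] using this
        have e3 : mul b₂ z₁ = 0 := by rw [comm]; exact hzero z₁ hz₁ b₂ hb₂
        rw [e3, add_zero] at h
        exact h
      calc mul b₁ z = mul b₁ (z₁ + z₂) := by rw [hz]
        _ = mul b₁ z₁ + mul b₁ z₂ := by simp [map_add]
        _ = 0 := by rw [e1, e2, add_zero]
    rw [← hab, hb₁0, zero_add]
    exact hb₂
end

section
/- Let F be a field of characteristic 0 and A an associative F-algebra such that every derivation D of the Jordan algebra A⁺ has the form D(x) = xd − dx for some d ∈ A (this holds when A is simple). Let L denote A viewed as a Lie algebra under the commutator [a, b] = ab − ba and Z(L) its center. Then Der(A⁺) is a simple Lie algebra if and only if the quotient Lie algebra L/Z(L) is a simple Lie algebra. -/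
attribute [local instance] LieRing.ofAssociativeRing

section Defs

variable {F J : Type*} [Field F] [AddCommGroup J] [Module F J]

/-- The derivations of a bilinear product, as a Lie subalgebra of the
endomorphism algebra of the underlying module. -/
def derSet (mul : J →ₗ[F] J →ₗ[F] J) : LieSubalgebra F (Module.End F J) where
  carrier := {D | ∀ x y : J, D (mul x y) = mul (D x) y + mul x (D y)}
  add_mem' := by
    intro D E hD hE
    simp only [Set.mem_setOf_eq] at hD hE ⊢
    intro x y
    simp only [LinearMap.add_apply, hD, hE, map_add, LinearMap.add_apply]
    abel
  zero_mem' := by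
    simp only [Set.mem_setOf_eq]
    intro x y; simp
  smul_mem' := by
    intro c D hD
    simp only [Set.mem_setOf_eq] at hD ⊢
    intro x y
    simp only [LinearMap.smul_apply, hD, map_smul, smul_add, LinearMap.smul_apply]
  lie_mem' := by
    intro D E hD hE
    simp only [Set.mem_setOf_eq] at hD hE ⊢
    intro x y
    simp only [LieRing.of_associative_ring_bracket, LinearMap.sub_apply,
      Module.End.mul_apply, hD, hE, map_add, map_sub, LinearMap.add_apply,
      LinearMap.sub_apply]
    abel

end Defs


theorem LieAlgebra.IsSimple.of_lieEquiv {R L L' : Type*} [CommRing R] [LieRing L]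
    [LieAlgebra R L] [LieRing L'] [LieAlgebra R L'] (e : L ≃ₗ⁅R⁆ L')
    (h : LieAlgebra.IsSimple R L) : LieAlgebra.IsSimple R L' where
  eq_bot_or_eq_top I := by
    rcases h.eq_bot_or_eq_top (LieIdeal.comap e.toLieHom I) with hI | hI
    · left
      rw [eq_bot_iff]
      intro x hx
      have h1 : e.symm x ∈ LieIdeal.comap e.toLieHom I := by
        rw [LieIdeal.mem_comap]
        show e (e.symm x) ∈ I
        rw [e.apply_symm_apply]
        exact hx
      rw [hI, LieSubmodule.mem_bot] at h1
      rw [LieSubmodule.mem_bot]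
      calc x = e (e.symm x) := (e.apply_symm_apply x).symm
        _ = e 0 := by rw [h1]
        _ = 0 := by rw [show e (0 : L) = e.toLieHom 0 from rfl]; exact e.toLieHom.map_zero
    · right
      rw [eq_top_iff]
      intro x _
      have h1 : e.symm x ∈ LieIdeal.comap e.toLieHom I := by
        rw [hI]; trivial
      rw [LieIdeal.mem_comap] at h1
      have h2 : e (e.symm x) ∈ I := h1
      rwa [e.apply_symm_apply] at h2
  non_abelian := fun hab =>
    h.non_abelian ((lie_abelian_iff_equiv_lie_abelian e).mpr hab)

theorem lieSimple_iff_of_lieEquiv {R L L' : Type*} [CommRing R] [LieRing L]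
    [LieAlgebra R L] [LieRing L'] [LieAlgebra R L'] (e : L ≃ₗ⁅R⁆ L') :
    LieAlgebra.IsSimple R L ↔ LieAlgebra.IsSimple R L' :=
  ⟨fun h => h.of_lieEquiv e, fun h => h.of_lieEquiv e.symm⟩

/-- Let `F` be a field of characteristic `0` and `A` an
associative `F`-algebra such that every derivation of the Jordan algebra `A⁺`
(with product `a ∘ b = (ab + ba)/2`) is of the form `x ↦ xd - dx` for some
`d ∈ A`.  Let `L` be `A` with the commutator bracket and `Z(L)` its center.
Then `Der(A⁺)` is a simple Lie algebra iff `L/Z(L)` is a simple Lie algebra. -/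
theorem derSet_symAlg_simple_iff_quotient_center_simple
    {F A : Type*} [Field F] [CharZero F] [Ring A] [Algebra F A]
    -- the Jordan product of `A⁺`
    (jmul : A →ₗ[F] A →ₗ[F] A)
    (hjmul : ∀ x y : A, jmul x y = (2 : F)⁻¹ • (x * y + y * x))
    -- every derivation of `A⁺` is of the form `x ↦ xd - dx`
    (hinner : ∀ D ∈ derSet jmul, ∃ d : A, ∀ x : A, D x = x * d - d * x) :
    LieAlgebra.IsSimple F ↥(derSet jmul)
      ↔ LieAlgebra.IsSimple F (A ⧸ LieAlgebra.center F A) := by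

  -- `ad d` is a derivation of the Jordan product
  have key : ∀ d : A, (LieAlgebra.ad F A) d ∈ derSet jmul := by
    intro d x y
    simp only [LieAlgebra.ad_apply, hjmul, LieRing.of_associative_ring_bracket,
      mul_smul_comm, smul_mul_assoc, ← smul_sub, ← smul_add]
    congr 1
    noncomm_ring
  -- the Lie algebra homomorphism `A → derSet jmul`
  let f : A →ₗ⁅F⁆ ↥(derSet jmul) :=
    { toFun := fun d => ⟨LieAlgebra.ad F A d, key d⟩
      map_add' := by intro a b; ext x; simp
      map_smul' := by
        intro c a
        ext x
        show ((LieAlgebra.ad F A) (c • a)) x = (c • (LieAlgebra.ad F A) a) x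
        rw [map_smul]
      map_lie' := by intro a b; ext x; simp }
  have hf : ∀ (d : A) (x : A), ((f d : Module.End F A)) x = ⁅d, x⁆ := fun d x => rfl
  -- f is surjective
  have hsurj : Function.Surjective f := by
    intro D
    obtain ⟨d, hd⟩ := hinner (D : Module.End F A) D.2
    refine ⟨-d, ?_⟩
    ext x
    rw [hf]
    rw [hd x]
    simp only [LieRing.of_associative_ring_bracket]
    noncomm_ring
  -- the kernel of f is the center
  have hker : f.ker = LieAlgebra.center F A := by
    have hadker : (LieAlgebra.ad F A).ker = LieAlgebra.center F A := by simp
    rw [← hadker]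
    ext x
    simp only [LieHom.mem_ker]
    constructor
    · intro h
      have := congrArg (Subtype.val) h
      simpa [f] using this
    · intro h
      exact Subtype.ext (by simpa [f] using h)
  have hrange : f.range = ⊤ := by
    rw [eq_top_iff]
    intro x _
    obtain ⟨d, hd⟩ := hsurj x
    exact ⟨d, hd⟩
  have e : (A ⧸ LieAlgebra.center F A) ≃ₗ⁅F⁆ ↥(derSet jmul) := by
    rw [← hker]
    exact f.quotKerEquivRange.trans
      ((LieEquiv.ofEq _ _ (by rw [hrange])).trans LieSubalgebra.topEquiv)
  exact (lieSimple_iff_of_lieEquiv e).symm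
end

section
/- Let F be a field of characteristic ≠ 2, let n ≥ 1, and let α₁, …, αₙ ∈ F be nonzero. Then the Lie algebra Der(J(α)) of derivations of the spin factor J(α) is isomorphic, as an F-Lie algebra, to the Lie algebra M of n×n matrices v = (v_{ij}) over F satisfying αᵢ v_{ji} + αⱼ v_{ij} = 0 for all i, j (the matrices skew-adjoint with respect to the diagonal matrix diag(α₁, …, αₙ)), equipped with the commutator bracket. -/
attribute [local instance 100] LieRing.ofAssociativeRing

/-- Let `F` be a field of characteristic `≠ 2`, `n ≥ 1`, and
`α₁, …, αₙ ∈ F` nonzero.  The spin factor `J(α)` is the Jordan algebra on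
`F × (Fin n → F)` whose basis `{1, u₁, …, uₙ}` (where `1 = (1,0)` and
`uᵢ = (0, eᵢ)`) satisfies `1 ∘ x = x`, `uᵢ ∘ uᵢ = αᵢ • 1` and `uᵢ ∘ uⱼ = 0`
for `i ≠ j`.  Then `Der (J(α))` is isomorphic as an `F`-Lie algebra to the Lie
algebra of `n × n` matrices `v` with `αᵢ v_{ji} + αⱼ v_{ij} = 0` for all
`i, j`, i.e. the matrices skew-adjoint w.r.t. `diag(α₁, …, αₙ)`. -/
theorem derSet_spinFactor_iso_skewAdjointMatrices
    {F : Type*} [Field F] (h2 : (2 : F) ≠ 0)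
    (n : ℕ) (hn : 1 ≤ n) (α : Fin n → F) (hα : ∀ i, α i ≠ 0)
    -- the spin factor product on `F × (Fin n → F)`
    (jmul : (F × (Fin n → F)) →ₗ[F] (F × (Fin n → F)) →ₗ[F] (F × (Fin n → F)))
    (hcomm : ∀ p q, jmul p q = jmul q p)
    (hone : ∀ p, jmul ((1 : F), (0 : Fin n → F)) p = p)
    (hdiag : ∀ i : Fin n, jmul ((0 : F), Pi.single i (1 : F))
      ((0 : F), Pi.single i (1 : F)) = α i • ((1 : F), (0 : Fin n → F)))
    (hoff : ∀ i j : Fin n, i ≠ j → jmul ((0 : F), Pi.single i (1 : F))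
      ((0 : F), Pi.single j (1 : F)) = 0) :
    Nonempty (↥(derSet jmul) ≃ₗ⁅F⁆
      ↥(skewAdjointMatricesLieSubalgebra (Matrix.diagonal α))) := by
  classical
  set one : F × (Fin n → F) := ((1:F), (0 : Fin n → F)) with hone_def
  set u : Fin n → F × (Fin n → F) := fun i => ((0:F), Pi.single i (1:F)) with hu_def
  have hone' : ∀ p, jmul p one = p := fun p => by rw [hcomm]; exact hone p
  have hsum : ∀ w : Fin n → F, ∑ i, w i • (Pi.single i 1 : Fin n → F) = w := by
    intro w; funext j
    rw [Finset.sum_apply]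
    simp [Pi.single_apply]
  have hdecomp : ∀ p : F × (Fin n → F), p = p.1 • one + ∑ i, p.2 i • u i := by
    intro p
    apply Prod.ext
    · simp [one, u, Prod.fst_sum]
    · simp only [Prod.snd_add, Prod.smul_snd, Prod.snd_sum, one, u]
      rw [hsum p.2]
      simp
  have hmul : ∀ p q : F × (Fin n → F), jmul p q =
      (p.1 * q.1 + ∑ i, α i * (p.2 i * q.2 i), p.1 • q.2 + q.1 • p.2) := by
    intro p q
    have hinner : ∀ x : Fin n, ∑ j, q.2 x • p.2 j • jmul (u j) (u x)
        = (q.2 x * (p.2 x * α x)) • one := by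
      intro x
      rw [Finset.sum_eq_single x]
      · rw [hdiag x, smul_smul, smul_smul, mul_assoc]
      · intro j _ hj; rw [hoff j x hj, smul_zero, smul_zero]
      · simp
    conv_lhs => rw [hdecomp p, hdecomp q]
    simp only [map_add, map_smul, map_sum, LinearMap.add_apply, LinearMap.smul_apply,
      LinearMap.sum_apply, hone, hone', smul_add, Finset.smul_sum]
    simp only [hinner]
    apply Prod.ext
    · simp only [Prod.fst_add, Prod.smul_fst, Prod.fst_sum, Finset.sum_add_distrib,
        one, u, smul_eq_mul, mul_one, mul_zero, smul_zero, Finset.sum_const_zero,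
        add_zero, zero_add]
      rw [mul_comm q.1 p.1]
      congr 1
      exact Finset.sum_congr rfl fun i _ => by ring
    · simp only [Prod.snd_add, Prod.smul_snd, Prod.snd_sum, Finset.sum_add_distrib,
        one, u, smul_zero, add_zero, zero_add, Finset.sum_const_zero]
      rw [← Finset.smul_sum,
          Finset.sum_congr rfl fun i _ => smul_comm (q.2 i) p.1 ((Pi.single i 1 : Fin n → F)),
          ← Finset.smul_sum, hsum, hsum, add_comm]
  -- derivation facts
  have hD0 : ∀ D : Module.End F (F × (Fin n → F)), D ∈ derSet jmul → D one = 0 := by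
    intro D hD
    have h := hD one one
    rw [hone one, hone' (D one), hone (D one)] at h
    exact (left_eq_add.mp h)
  have hcol : ∀ (i : Fin n) (w : Fin n → F),
      ∑ k, α k * ((Pi.single i 1 : Fin n → F) k * w k) = α i * w i := by
    intro i w
    rw [Finset.sum_eq_single i]
    · simp
    · intro k _ hk; simp [Pi.single_eq_of_ne hk]
    · simp
  have hcol' : ∀ (j : Fin n) (w : Fin n → F),
      ∑ k, α k * (w k * (Pi.single j 1 : Fin n → F) k) = α j * w j := by
    intro j w
    rw [Finset.sum_congr rfl fun k _ => by rw [mul_comm (w k)]]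
    exact hcol j w
  have hDu1 : ∀ D ∈ derSet jmul, ∀ i, (D (u i)).1 = 0 ∧ (D (u i)).2 i = 0 := by
    intro D hD i
    have h := hD (u i) (u i)
    rw [hdiag i, map_smul, hD0 D hD, smul_zero, hcomm (D (u i)) (u i)] at h
    have hx : jmul (u i) (D (u i)) = 0 := by
      have h2' : (2:F) • (jmul (u i) (D (u i))) = 0 := by rw [two_smul]; exact h.symm
      exact (smul_eq_zero.mp h2').resolve_left h2
    rw [hmul (u i) (D (u i))] at hx
    have e1 := congrArg Prod.fst hx
    have e2 := congrArg (fun z : F × (Fin n → F) => z.2 i) hx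
    simp only [u, hcol, zero_mul, zero_add, Prod.fst_zero] at e1
    simp only [u, Prod.snd_zero, Pi.add_apply, Pi.smul_apply, Pi.zero_apply, zero_smul,
      Pi.single_eq_same, smul_eq_mul, mul_one, zero_add] at e2
    refine ⟨e2, ?_⟩
    exact (mul_eq_zero.mp e1).resolve_left (hα i)
  have hskew : ∀ D ∈ derSet jmul, ∀ i j, α j * ((D (u i)).2 j) + α i * ((D (u j)).2 i) = 0 := by
    intro D hD i j
    by_cases hij : i = j
    · subst hij
      rw [(hDu1 D hD i).2, mul_zero, add_zero]
    · have h := hD (u i) (u j)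
      rw [hoff i j hij, map_zero, hmul (D (u i)) (u j), hmul (u i) (D (u j))] at h
      have e1 := congrArg Prod.fst h
      simp only [u, Prod.fst_add, Prod.fst_zero, hcol, hcol', mul_zero, zero_mul,
        zero_add, add_zero] at e1
      exact e1.symm
  have hDform : ∀ D ∈ derSet jmul, ∀ p : F × (Fin n → F),
      D p = ((0:F), Matrix.mulVec (Matrix.of fun a b => (D (u b)).2 a) p.2) := by
    intro D hD p
    conv_lhs => rw [hdecomp p]
    rw [map_add, map_smul, hD0 D hD, smul_zero, zero_add, map_sum]
    simp only [map_smul]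
    apply Prod.ext
    · simp only [Prod.fst_sum, Prod.smul_fst]
      rw [Finset.sum_congr rfl fun i _ => by
        rw [(hDu1 D hD i).1, smul_zero]]
      simp
    · simp only [Prod.snd_sum, Prod.smul_snd]
      funext j
      rw [Finset.sum_apply]
      simp only [Pi.smul_apply, smul_eq_mul, Matrix.mulVec, dotProduct,
        Matrix.of_apply]
      exact Finset.sum_congr rfl fun i _ => mul_comm _ _
  -- skew-adjoint membership characterisation
  have hmemskew : ∀ A : Matrix (Fin n) (Fin n) F,
      A ∈ skewAdjointMatricesLieSubalgebra (Matrix.diagonal α) ↔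
        ∀ i j, α j * A j i + α i * A i j = 0 := by
    intro A
    rw [mem_skewAdjointMatricesLieSubalgebra, mem_skewAdjointMatricesSubmodule]
    constructor
    · intro h i j
      have h' : A.transpose * Matrix.diagonal α = Matrix.diagonal α * (-A) := h
      have := Matrix.ext_iff.mpr h' j i
      rw [Matrix.mul_diagonal, Matrix.diagonal_mul] at this
      simp only [Matrix.transpose_apply, Matrix.neg_apply] at this
      linear_combination this
    · intro h
      show A.transpose * Matrix.diagonal α = Matrix.diagonal α * (-A)
      ext i j
      rw [Matrix.mul_diagonal, Matrix.diagonal_mul]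
      simp only [Matrix.transpose_apply, Matrix.neg_apply]
      linear_combination h j i
  -- the inverse map on endomorphisms
  set LA : Matrix (Fin n) (Fin n) F → Module.End F (F × (Fin n → F)) := fun A =>
    LinearMap.prod (0 : (F × (Fin n → F)) →ₗ[F] F)
      ((Matrix.mulVecLin A).comp (LinearMap.snd F F (Fin n → F))) with hLA
  have hLAapp : ∀ A p, LA A p = ((0:F), Matrix.mulVec A p.2) := by
    intro A p
    simp [LA, LinearMap.prod_apply]
  have hpair : ∀ (A : Matrix (Fin n) (Fin n) F), (∀ i j, α j * A j i + α i * A i j = 0) →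
      ∀ (v w : Fin n → F),
      (∑ k, α k * ((Matrix.mulVec A v) k * w k)) + (∑ k, α k * (v k * (Matrix.mulVec A w) k)) = 0 := by
    intro A hA v w
    have h1 : ∑ k, α k * ((Matrix.mulVec A v) k * w k) = ∑ k, ∑ l, (α k * A k l) * (v l * w k) := by
      refine Finset.sum_congr rfl fun k _ => ?_
      simp only [Matrix.mulVec, dotProduct, Finset.sum_mul, Finset.mul_sum]
      exact Finset.sum_congr rfl fun l _ => by ring
    have h2 : ∑ k, α k * (v k * (Matrix.mulVec A w) k) = ∑ k, ∑ l, (α l * A l k) * (w k * v l) := by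
      rw [Finset.sum_comm]
      refine Finset.sum_congr rfl fun k _ => ?_
      simp only [Matrix.mulVec, dotProduct, Finset.sum_mul, Finset.mul_sum]
      exact Finset.sum_congr rfl fun l _ => by ring
    rw [h1, h2, ← Finset.sum_add_distrib]
    refine Finset.sum_eq_zero fun k _ => ?_
    rw [← Finset.sum_add_distrib]
    refine Finset.sum_eq_zero fun l _ => ?_
    linear_combination (v l * w k) * hA l k
  have hder : ∀ A : Matrix (Fin n) (Fin n) F, (∀ i j, α j * A j i + α i * A i j = 0) →
      LA A ∈ derSet jmul := by
    intro A hA x y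
    rw [hLAapp, hLAapp, hLAapp, hmul x y, hmul ((0:F), Matrix.mulVec A x.2) y,
      hmul x ((0:F), Matrix.mulVec A y.2)]
    apply Prod.ext
    · simp only [Prod.fst_add, zero_mul, mul_zero, zero_add, add_zero]
      exact (hpair A hA x.2 y.2).symm
    · simp only [Prod.snd_add, zero_smul, zero_add, add_zero, Matrix.mulVec_add,
        Matrix.mulVec_smul]
      abel
  -- now build the equivalence
  have hmemD : ∀ D : ↥(derSet jmul),
      (Matrix.of (fun a b => (D.1 (u b)).2 a)) ∈
        skewAdjointMatricesLieSubalgebra (Matrix.diagonal α) :=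
    fun D => (hmemskew _).mpr (fun i j => hskew D.1 D.2 i j)
  have hmemL : ∀ A : ↥(skewAdjointMatricesLieSubalgebra (Matrix.diagonal α)),
      LA A.1 ∈ derSet jmul :=
    fun A => hder A.1 ((hmemskew A.1).mp A.2)
  refine ⟨{ toFun := fun D => ⟨Matrix.of (fun a b => (D.1 (u b)).2 a), hmemD D⟩
            map_add' := ?_
            map_smul' := ?_
            map_lie' := ?_
            invFun := fun A => ⟨LA A.1, hmemL A⟩
            left_inv := ?_
            right_inv := ?_ }⟩
  · intro D E
    apply Subtype.ext
    show (Matrix.of fun a b => ((D.1 + E.1) (u b)).2 a)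
        = Matrix.of (fun a b => (D.1 (u b)).2 a) + Matrix.of (fun a b => (E.1 (u b)).2 a)
    ext a b
    simp only [Matrix.of_apply, Matrix.add_apply, LinearMap.add_apply, Prod.snd_add,
      Pi.add_apply]
  · intro c D
    apply Subtype.ext
    show (Matrix.of fun a b => ((c • D.1) (u b)).2 a)
        = c • Matrix.of (fun a b => (D.1 (u b)).2 a)
    ext a b
    simp only [Matrix.of_apply, Matrix.smul_apply, LinearMap.smul_apply, Prod.smul_snd,
      Pi.smul_apply]
  · intro D E
    apply Subtype.ext
    show (Matrix.of fun a b =>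
        ((⁅D.1, E.1⁆ : Module.End F (F × (Fin n → F))) (u b)).2 a)
        = ⁅Matrix.of (fun a b => (D.1 (u b)).2 a), Matrix.of (fun a b => (E.1 (u b)).2 a)⁆
    ext a b
    rw [LieRing.of_associative_ring_bracket, LieRing.of_associative_ring_bracket]
    simp only [Matrix.of_apply, Matrix.sub_apply, LinearMap.sub_apply, Module.End.mul_apply,
      Prod.snd_sub, Pi.sub_apply]
    rw [hDform D.1 D.2 (E.1 (u b)), hDform E.1 E.2 (D.1 (u b))]
    simp only [Matrix.mul_apply, Matrix.mulVec, dotProduct, Matrix.of_apply]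
  · intro D
    apply Subtype.ext
    apply LinearMap.ext
    intro p
    show LA (Matrix.of (fun a b => (D.1 (u b)).2 a)) p = D.1 p
    rw [hLAapp]
    exact (hDform D.1 D.2 p).symm
  · intro A
    apply Subtype.ext
    show (Matrix.of fun a b => ((LA A.1) (u b)).2 a) = A.1
    ext a b
    simp [hLAapp, u, Matrix.mulVec_single]
end

section
/- Let F be a field of characteristic 0, let n ≥ 3 with n ≠ 4, and let α₁, …, αₙ ∈ F be nonzero. Then the Lie algebra of n×n matrices v = (v_{ij}) over F satisfying αᵢ v_{ji} + αⱼ v_{ij} = 0 for all i, j (the matrices skew-adjoint with respect to the diagonal matrix diag(α₁, …, αₙ)), equipped with the commutator bracket, is a simple Lie algebra. -/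
open Matrix

section SkewAux

variable {F : Type*} [Field F] {n : ℕ}

/-- Basis matrices of the Lie algebra of matrices skew-adjoint w.r.t. `diagonal α`. -/
def skewM (α : Fin n → F) (i j : Fin n) : Matrix (Fin n) (Fin n) F :=
  α j • Matrix.single i j 1 - α i • Matrix.single j i 1

lemma skewM_apply (α : Fin n → F) (i j a b : Fin n) :
    skewM α i j a b =
      (if i = a ∧ j = b then α j else 0) - (if j = a ∧ i = b then α i else 0) := by
  simp [skewM, Matrix.single, Matrix.smul_apply, mul_ite]

lemma mem_skew_iff (α : Fin n → F) (v : Matrix (Fin n) (Fin n) F) :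
    v ∈ skewAdjointMatricesLieSubalgebra (Matrix.diagonal α) ↔
      ∀ a b, α b * v b a + α a * v a b = 0 := by
  rw [mem_skewAdjointMatricesLieSubalgebra, mem_skewAdjointMatricesSubmodule]
  unfold Matrix.IsSkewAdjoint Matrix.IsAdjointPair
  rw [← Matrix.ext_iff]
  simp only [Matrix.mul_diagonal, Matrix.diagonal_mul, Matrix.transpose_apply, Matrix.neg_apply]
  constructor
  · intro h a b; linear_combination h a b
  · intro h a b; linear_combination h a b

lemma skewM_mem (α : Fin n → F) (i j : Fin n) :
    skewM α i j ∈ skewAdjointMatricesLieSubalgebra (Matrix.diagonal α) := by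
  rw [mem_skew_iff]
  intro a b
  simp only [skewM_apply]
  by_cases hia : i = a <;> by_cases hja : j = a <;> by_cases hib : i = b <;>
    by_cases hjb : j = b <;> simp_all <;> ring

lemma skewM_swap (α : Fin n → F) (i j : Fin n) : skewM α j i = - skewM α i j := by
  unfold skewM; abel

lemma diag_zero_of_skew [CharZero F] (α : Fin n → F) (hα : ∀ i, α i ≠ 0)
    (v : Matrix (Fin n) (Fin n) F) (hv : ∀ a b, α b * v b a + α a * v a b = 0) (a : Fin n) :
    v a a = 0 := by
  have h := hv a a
  have h2 : α a * v a a * 2 = 0 := by linear_combination h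
  rcases mul_eq_zero.mp h2 with h3 | h3
  · rcases mul_eq_zero.mp h3 with h4 | h4
    · exact absurd h4 (hα a)
    · exact h4
  · exact absurd h3 two_ne_zero

lemma skewM_mul_apply (α : Fin n → F) (v : Matrix (Fin n) (Fin n) F) (i j a b : Fin n) :
    (skewM α i j * v) a b =
      (if i = a then α j * v j b else 0) - (if j = a then α i * v i b else 0) := by
  simp only [skewM, Matrix.sub_mul, Matrix.smul_mul, Matrix.sub_apply, Matrix.smul_apply,
    Matrix.mul_apply, Matrix.single, Matrix.of_apply, ite_and]
  by_cases hia : i = a <;> by_cases hja : j = a <;>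
    simp [hia, hja, Finset.sum_ite_eq, mul_comm]

lemma mul_skewM_apply (α : Fin n → F) (v : Matrix (Fin n) (Fin n) F) (i j a b : Fin n) :
    (v * skewM α i j) a b =
      (if j = b then α j * v a i else 0) - (if i = b then α i * v a j else 0) := by
  simp only [skewM, Matrix.mul_sub, Matrix.mul_smul, Matrix.sub_apply, Matrix.smul_apply,
    Matrix.mul_apply, Matrix.single, Matrix.of_apply, ite_and]
  by_cases hib : i = b <;> by_cases hjb : j = b <;>
    simp [hib, hjb, Finset.sum_ite_eq', mul_comm]

lemma lie_skewM_apply (α : Fin n → F) (v : Matrix (Fin n) (Fin n) F) (i j a b : Fin n) :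
    ⁅skewM α i j, v⁆ a b =
      ((if i = a then α j * v j b else 0) - (if j = a then α i * v i b else 0))
        - ((if j = b then α j * v a i else 0) - (if i = b then α i * v a j else 0)) := by
  rw [Ring.lie_def]
  rw [Matrix.sub_apply, skewM_mul_apply, mul_skewM_apply]

/-- The condition "exactly one of `a`, `b` belongs to `{i, j}`". -/
def eOne (i j a b : Fin n) : Prop :=
  ((a = i ∨ a = j) ∧ ¬(b = i ∨ b = j)) ∨ (¬(a = i ∨ a = j) ∧ (b = i ∨ b = j))

instance (i j a b : Fin n) : Decidable (eOne i j a b) := by unfold eOne; infer_instance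

set_option linter.unreachableTactic false in
set_option linter.unusedTactic false in
lemma lie_lie_skewM_apply (α : Fin n → F) (v : Matrix (Fin n) (Fin n) F) (i j : Fin n)
    (hij : i ≠ j) (hv : ∀ a b, α b * v b a + α a * v a b = 0)
    (hd : ∀ c, v c c = 0) (a b : Fin n) :
    ⁅skewM α i j, ⁅skewM α i j, v⁆⁆ a b =
      if eOne i j a b then -(α i * α j) * v a b else 0 := by
  unfold eOne
  by_cases hai : i = a <;> by_cases haj : j = a <;> by_cases hbi : i = b <;>
      by_cases hbj : j = b <;> subst_vars <;>
    simp only [lie_skewM_apply] <;>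
    simp_all [eq_comm] <;>
    first
      | ring1
      | linear_combination (-2 * α j) * hv i j
      | linear_combination (-2 * α i) * hv i j
      | (right; linear_combination - hv a b)
      | (right; linear_combination - hv b a)

lemma lie_skewM_skewM (α : Fin n → F) (i j k : Fin n) (hij : i ≠ j) (hjk : j ≠ k)
    (hik : i ≠ k) :
    ⁅skewM α i j, skewM α j k⁆ = α j • skewM α i k := by
  ext a b
  rw [lie_skewM_apply]
  simp only [skewM_apply, Matrix.smul_apply, smul_eq_mul]
  by_cases hia : i = a <;> by_cases hja : j = a <;> by_cases hka : k = a <;>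
    by_cases hib : i = b <;> by_cases hjb : j = b <;> by_cases hkb : k = b <;>
    subst_vars <;> simp_all [eq_comm] <;> ring1

lemma sum_skewM_eq (α : Fin n → F) (hα : ∀ i, α i ≠ 0) [CharZero F]
    (v : Matrix (Fin n) (Fin n) F) (hv : ∀ a b, α b * v b a + α a * v a b = 0) :
    ∑ k : Fin n, ∑ l : Fin n, ((2 * α l)⁻¹ * v k l) • skewM α k l = v := by
  ext a b
  simp only [Matrix.sum_apply, Matrix.smul_apply, skewM_apply, smul_eq_mul]
  have key : ∀ k, ∑ l : Fin n,
      ((2 * α l)⁻¹ * v k l) * ((if k = a ∧ l = b then α l else 0)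
        - (if l = a ∧ k = b then α k else 0)) =
      (if k = a then (2 * α b)⁻¹ * v k b * α b else 0)
        - (if k = b then (2 * α a)⁻¹ * v k a * α k else 0) := by
    intro k
    simp only [mul_sub]
    rw [Finset.sum_sub_distrib]
    congr 1
    · by_cases hka : k = a <;>
        simp [hka, mul_ite, Finset.sum_ite_eq, Finset.sum_ite_eq']
    · by_cases hkb : k = b <;>
        simp [hkb, mul_ite, Finset.sum_ite_eq, Finset.sum_ite_eq']
  simp only [key]
  rw [Finset.sum_sub_distrib]
  simp only [Finset.sum_ite_eq', Finset.mem_univ, if_true]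
  have h2 : (2 : F) ≠ 0 := two_ne_zero
  have ha := hα a
  have hb := hα b
  field_simp
  linear_combination (-1 : F) * hv a b

/-- The basis elements as elements of the Lie subalgebra. -/
def mSkew (α : Fin n → F) (i j : Fin n) :
    ↥(skewAdjointMatricesLieSubalgebra (Matrix.diagonal α)) :=
  ⟨skewM α i j, skewM_mem α i j⟩

lemma hv_of_mem (α : Fin n → F)
    (x : ↥(skewAdjointMatricesLieSubalgebra (Matrix.diagonal α))) :
    ∀ a b, α b * (x : Matrix (Fin n) (Fin n) F) b a
      + α a * (x : Matrix (Fin n) (Fin n) F) a b = 0 :=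
  (mem_skew_iff α _).mp x.2

lemma coe_lie_lie_mSkew (α : Fin n → F) (hα : ∀ i, α i ≠ 0) [CharZero F] (i j : Fin n)
    (hij : i ≠ j) (x : ↥(skewAdjointMatricesLieSubalgebra (Matrix.diagonal α))) (a b : Fin n) :
    ((⁅mSkew α i j, ⁅mSkew α i j, x⁆⁆ :
        ↥(skewAdjointMatricesLieSubalgebra (Matrix.diagonal α))) :
        Matrix (Fin n) (Fin n) F) a b =
      if eOne i j a b then -(α i * α j) * (x : Matrix (Fin n) (Fin n) F) a b else 0 := by
  have h1 : ((⁅mSkew α i j, ⁅mSkew α i j, x⁆⁆ :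
      ↥(skewAdjointMatricesLieSubalgebra (Matrix.diagonal α))) :
      Matrix (Fin n) (Fin n) F) = ⁅skewM α i j, ⁅skewM α i j, (x : Matrix (Fin n) (Fin n) F)⁆⁆ :=
    rfl
  rw [h1, lie_lie_skewM_apply α _ i j hij (hv_of_mem α x)
    (diag_zero_of_skew α hα _ (hv_of_mem α x))]

end SkewAux

section SkewAux2

variable {F : Type*} [Field F] {n : ℕ}

lemma mSkew_bracket (α : Fin n → F) (i j k : Fin n) (hij : i ≠ j) (hjk : j ≠ k) (hik : i ≠ k) :
    ⁅mSkew α i j, mSkew α j k⁆ = α j • mSkew α i k := by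
  apply Subtype.ext
  exact lie_skewM_skewM α i j k hij hjk hik

lemma mSkew_swap (α : Fin n → F) (i j : Fin n) : mSkew α j i = - mSkew α i j :=
  Subtype.ext (skewM_swap α i j)

lemma mSkew_diag (α : Fin n → F) (i : Fin n) : mSkew α i i = 0 :=
  Subtype.ext (sub_self _)

lemma all_mSkew_mem (α : Fin n → F) (hα : ∀ i, α i ≠ 0)
    (I : LieIdeal F ↥(skewAdjointMatricesLieSubalgebra (Matrix.diagonal α)))
    (p q : Fin n) (hpq : p ≠ q) (hm : mSkew α p q ∈ I) :
    ∀ i j : Fin n, mSkew α i j ∈ I := by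
  have h2 : ∀ j, j ≠ p → mSkew α p j ∈ I := by
    intro j hjp
    by_cases hjq : j = q
    · subst hjq; exact hm
    · have hqj : q ≠ j := fun h => hjq h.symm
      have hb : ⁅mSkew α p q, mSkew α q j⁆ = α q • mSkew α p j :=
        mSkew_bracket α p q j hpq hqj (fun h => hjp h.symm)
      have hkey : mSkew α p j = (-(α q)⁻¹) • ⁅mSkew α q j, mSkew α p q⁆ := by
        rw [← lie_skew, hb]
        rw [smul_neg, neg_smul, neg_neg, smul_smul, inv_mul_cancel₀ (hα q), one_smul]
      rw [hkey]
      exact I.smul_mem _ (I.lie_mem hm)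
  intro i j
  by_cases hij : i = j
  · subst hij; rw [mSkew_diag]; exact I.zero_mem
  · by_cases hip : i = p
    · rw [hip]
      exact h2 j (fun h => hij (by rw [hip, h]))
    · by_cases hjp : j = p
      · rw [hjp, show mSkew α i p = - mSkew α p i from mSkew_swap α p i]
        exact neg_mem (h2 i hip)
      · have hb : ⁅mSkew α i p, mSkew α p j⁆ = α p • mSkew α i j :=
          mSkew_bracket α i p j hip (fun h => hjp h.symm) hij
        have hkey : mSkew α i j = (α p)⁻¹ • ⁅mSkew α i p, mSkew α p j⁆ := by
          rw [hb, smul_smul, inv_mul_cancel₀ (hα p), one_smul]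
        rw [hkey]
        exact I.smul_mem _ (I.lie_mem (h2 j hjp))

lemma ideal_eq_top (α : Fin n → F) (hα : ∀ i, α i ≠ 0) [CharZero F]
    (I : LieIdeal F ↥(skewAdjointMatricesLieSubalgebra (Matrix.diagonal α)))
    (hall : ∀ i j : Fin n, mSkew α i j ∈ I) : I = ⊤ := by
  rw [eq_top_iff]
  intro z _
  have hz2 : z = ∑ k : Fin n, ∑ l : Fin n,
      ((2 * α l)⁻¹ * (z : Matrix (Fin n) (Fin n) F) k l) • mSkew α k l := by
    apply Subtype.ext
    rw [AddSubmonoidClass.coe_finset_sum]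
    simp only [AddSubmonoidClass.coe_finset_sum, SetLike.val_smul]
    exact (sum_skewM_eq α hα _ (hv_of_mem α z)).symm
  rw [hz2]
  exact sum_mem fun k _ => sum_mem fun l _ => I.smul_mem _ (hall k l)

end SkewAux2

section SkewAux3

variable {F : Type*} [Field F] {n : ℕ}

lemma row_zero_case (α : Fin n → F) (hα : ∀ i, α i ≠ 0)
    (x : ↥(skewAdjointMatricesLieSubalgebra (Matrix.diagonal α)))
    (p q r : Fin n)
    (hshape : ∀ a b : Fin n, (x : Matrix (Fin n) (Fin n) F) a b ≠ 0 →
      (a = p ∧ b = q) ∨ (a = q ∧ b = p) ∨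
      (a = r ∧ b ≠ p ∧ b ≠ q ∧ b ≠ r) ∨ (b = r ∧ a ≠ p ∧ a ≠ q ∧ a ≠ r))
    (hemp : ∀ s, (x : Matrix (Fin n) (Fin n) F) r s = 0) :
    ∀ a b : Fin n, (x : Matrix (Fin n) (Fin n) F) a b ≠ 0 →
      (a = p ∧ b = q) ∨ (a = q ∧ b = p) := by
  intro a b hab
  rcases hshape a b hab with h | h | h | h
  · exact Or.inl h
  · exact Or.inr h
  · exfalso; rw [h.1] at hab; exact hab (hemp b)
  · exfalso
    rw [h.1] at hab
    have h0 := hv_of_mem α x r a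
    rw [hemp a] at h0
    have h1 : α a * (x : Matrix (Fin n) (Fin n) F) a r = 0 := by linear_combination h0
    rcases mul_eq_zero.mp h1 with h2 | h2
    · exact hα a h2
    · exact hab h2

open scoped Classical in
lemma extract (α : Fin n → F) (hα : ∀ i, α i ≠ 0) [CharZero F] (hn4 : n ≠ 4)
    (I : LieIdeal F ↥(skewAdjointMatricesLieSubalgebra (Matrix.diagonal α)))
    (p q r : Fin n) (hpq : p ≠ q) (hpr : p ≠ r) (hqr : q ≠ r) :
    ∀ m : ℕ, ∀ x : ↥(skewAdjointMatricesLieSubalgebra (Matrix.diagonal α)), x ∈ I →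
      (∀ a b : Fin n, (x : Matrix (Fin n) (Fin n) F) a b ≠ 0 →
        (a = p ∧ b = q) ∨ (a = q ∧ b = p) ∨
        (a = r ∧ b ≠ p ∧ b ≠ q ∧ b ≠ r) ∨ (b = r ∧ a ≠ p ∧ a ≠ q ∧ a ≠ r)) →
      ((Finset.univ.filter fun s => (x : Matrix (Fin n) (Fin n) F) r s ≠ 0).card ≤ m) →
      ∃ y, y ∈ I ∧
        (∀ a b : Fin n, (y : Matrix (Fin n) (Fin n) F) a b ≠ 0 →
          (a = p ∧ b = q) ∨ (a = q ∧ b = p)) ∧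
        (y : Matrix (Fin n) (Fin n) F) p q = (x : Matrix (Fin n) (Fin n) F) p q := by
  intro m
  induction m with
  | zero =>
    intro x hxI hshape hcard
    refine ⟨x, hxI, row_zero_case α hα x p q r hshape ?_, rfl⟩
    intro s
    by_contra hs
    have hmem : s ∈ Finset.univ.filter fun s => (x : Matrix (Fin n) (Fin n) F) r s ≠ 0 := by
      simp [hs]
    have := Finset.card_pos.mpr ⟨s, hmem⟩
    omega
  | succ m ih =>
    intro x hxI hshape hcard
    by_cases hemp : ∀ s, (x : Matrix (Fin n) (Fin n) F) r s = 0
    · exact ⟨x, hxI, row_zero_case α hα x p q r hshape hemp, rfl⟩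
    push_neg at hemp
    obtain ⟨s₀, hs₀⟩ := hemp
    obtain ⟨hs0p, hs0q, hs0r⟩ : s₀ ≠ p ∧ s₀ ≠ q ∧ s₀ ≠ r := by
      rcases hshape r s₀ hs₀ with h | h | h | h
      · exact absurd h.1 (Ne.symm hpr)
      · exact absurd h.1 (Ne.symm hqr)
      · exact h.2
      · exact absurd rfl h.2.2.2
    -- `n ≥ 5`
    have hcard4 : ({p, q, r, s₀} : Finset (Fin n)).card = 4 := by
      rw [Finset.card_insert_of_notMem (by simp [hpq, hpr, Ne.symm hs0p]),
        Finset.card_insert_of_notMem (by simp [hqr, Ne.symm hs0q]),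
        Finset.card_insert_of_notMem (by simp [Ne.symm hs0r]),
        Finset.card_singleton]
    have h4n : 4 ≤ n := by
      have := Finset.card_le_univ ({p, q, r, s₀} : Finset (Fin n))
      rw [hcard4] at this
      simpa using this
    have h5n : 5 ≤ n := by omega
    obtain ⟨t, ht⟩ : ∃ t : Fin n, t ∉ ({p, q, r, s₀} : Finset (Fin n)) := by
      by_contra hcon
      push_neg at hcon
      have hsub : (Finset.univ : Finset (Fin n)) ⊆ {p, q, r, s₀} := fun t _ => hcon t
      have := Finset.card_le_card hsub
      rw [hcard4, Finset.card_univ, Fintype.card_fin] at this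
      omega
    have htp : t ≠ p := by intro h; exact ht (by simp [h])
    have htq : t ≠ q := by intro h; exact ht (by simp [h])
    have htr : t ≠ r := by intro h; exact ht (by simp [h])
    have hts0 : t ≠ s₀ := by intro h; exact ht (by simp [h])
    have hs0t : s₀ ≠ t := Ne.symm hts0
    set x' := x + (α s₀ * α t)⁻¹ • ⁅mSkew α s₀ t, ⁅mSkew α s₀ t, x⁆⁆ with hx'def
    have hx'I : x' ∈ I := I.add_mem hxI (I.smul_mem _ (lie_mem_right F _ I _ _ (lie_mem_right F _ I _ _ hxI)))
    have hx'app : ∀ a b, (x' : Matrix (Fin n) (Fin n) F) a b =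
        if eOne s₀ t a b then 0 else (x : Matrix (Fin n) (Fin n) F) a b := by
      intro a b
      have hrfl : (x' : Matrix (Fin n) (Fin n) F) a b = (x : Matrix (Fin n) (Fin n) F) a b
          + (α s₀ * α t)⁻¹ *
            ((⁅mSkew α s₀ t, ⁅mSkew α s₀ t, x⁆⁆ :
              ↥(skewAdjointMatricesLieSubalgebra (Matrix.diagonal α))) :
              Matrix (Fin n) (Fin n) F) a b := rfl
      rw [hrfl, coe_lie_lie_mSkew α hα s₀ t hs0t x a b]
      by_cases hc : eOne s₀ t a b
      · rw [if_pos hc, if_pos hc]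
        have h1 := hα s₀
        have h2 := hα t
        field_simp
        ring
      · rw [if_neg hc, if_neg hc, mul_zero, add_zero]
    have hshape' : ∀ a b : Fin n, (x' : Matrix (Fin n) (Fin n) F) a b ≠ 0 →
        (a = p ∧ b = q) ∨ (a = q ∧ b = p) ∨
        (a = r ∧ b ≠ p ∧ b ≠ q ∧ b ≠ r) ∨ (b = r ∧ a ≠ p ∧ a ≠ q ∧ a ≠ r) := by
      intro a b hab
      rw [hx'app a b] at hab
      split_ifs at hab with hc
      · exact absurd rfl hab
      · exact hshape a b hab
    have hcard' : (Finset.univ.filter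
        fun s => (x' : Matrix (Fin n) (Fin n) F) r s ≠ 0).card ≤ m := by
      have hsub2 : (Finset.univ.filter fun s => (x' : Matrix (Fin n) (Fin n) F) r s ≠ 0) ⊆
          (Finset.univ.filter fun s => (x : Matrix (Fin n) (Fin n) F) r s ≠ 0).erase s₀ := by
        intro s hs
        simp only [Finset.mem_filter, Finset.mem_univ, true_and] at hs
        rw [hx'app r s] at hs
        split_ifs at hs with hc
        · exact absurd rfl hs
        · refine Finset.mem_erase.mpr ⟨?_, by simp [hs]⟩
          intro hss0
          apply hc
          rw [hss0]
          exact Or.inr ⟨by rintro (h | h); exacts [hs0r h.symm, htr h.symm], Or.inl rfl⟩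
      have hs0mem : s₀ ∈ Finset.univ.filter fun s => (x : Matrix (Fin n) (Fin n) F) r s ≠ 0 := by
        simp [hs₀]
      have hle := Finset.card_le_card hsub2
      rw [Finset.card_erase_of_mem hs0mem] at hle
      omega
    obtain ⟨y, hyI, hysupp, hypq⟩ := ih x' hx'I hshape' hcard'
    refine ⟨y, hyI, hysupp, ?_⟩
    rw [hypq, hx'app p q, if_neg ?_]
    rintro (⟨h1, -⟩ | ⟨-, h2⟩)
    · rcases h1 with h | h
      · exact hs0p h.symm
      · exact htp h.symm
    · rcases h2 with h | h
      · exact hs0q h.symm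
      · exact htq h.symm

end SkewAux3



/-- Let `F` be a field of characteristic `0`, `n ≥ 3` with
`n ≠ 4`, and `α₁, …, αₙ ∈ F` nonzero.  Then the Lie algebra of `n × n` matrices
`v` over `F` satisfying `αᵢ v_{ji} + αⱼ v_{ij} = 0` for all `i, j` (the matrices
skew-adjoint with respect to `diag(α₁, …, αₙ)`), with the commutator bracket,
is a simple Lie algebra. -/
theorem skewAdjointMatrices_diagonal_isSimple
    {F : Type*} [Field F] [CharZero F]
    (n : ℕ) (hn : 3 ≤ n) (hn4 : n ≠ 4) (α : Fin n → F) (hα : ∀ i, α i ≠ 0) :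
    LieAlgebra.IsSimple F
      ↥(skewAdjointMatricesLieSubalgebra (Matrix.diagonal α)) := by
  classical
  constructor
  · -- every ideal is ⊥ or ⊤
    intro I
    by_cases hI : I = ⊥
    · exact Or.inl hI
    right
    obtain ⟨x, hxI, hx0⟩ : ∃ x, x ∈ I ∧ x ≠ 0 := by
      by_contra hcon
      push_neg at hcon
      exact hI ((LieSubmodule.eq_bot_iff I).mpr hcon)
    obtain ⟨p, q, hpq0⟩ : ∃ p q, (x : Matrix (Fin n) (Fin n) F) p q ≠ 0 := by
      by_contra hcon
      push_neg at hcon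
      refine hx0 (Subtype.ext ?_)
      ext a b
      simpa using hcon a b
    have hpq : p ≠ q := by
      intro h
      subst h
      exact hpq0 (diag_zero_of_skew α hα _ (hv_of_mem α x) p)
    obtain ⟨r, hrp, hrq⟩ : ∃ r : Fin n, r ≠ p ∧ r ≠ q := by
      by_contra hcon
      push_neg at hcon
      have hsub : (Finset.univ : Finset (Fin n)) ⊆ {p, q} := by
        intro t _
        by_cases htp : t = p
        · simp [htp]
        · simp [hcon t htp]
      have h1 := Finset.card_le_card hsub
      have h2 : ({p, q} : Finset (Fin n)).card ≤ 2 :=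
        le_trans (Finset.card_insert_le _ _) (by simp)
      rw [Finset.card_univ, Fintype.card_fin] at h1
      omega
    have hpr : p ≠ r := Ne.symm hrp
    have hqr : q ≠ r := Ne.symm hrq
    -- project twice
    set x0 : ↥(skewAdjointMatricesLieSubalgebra (Matrix.diagonal α)) :=
      (-(α q * α r)⁻¹) • ⁅mSkew α q r, ⁅mSkew α q r, x⁆⁆ with hx0def
    set x1 : ↥(skewAdjointMatricesLieSubalgebra (Matrix.diagonal α)) :=
      (-(α p * α r)⁻¹) • ⁅mSkew α p r, ⁅mSkew α p r, x0⁆⁆ with hx1def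
    have hx0I : x0 ∈ I :=
      I.smul_mem _ (lie_mem_right F _ I _ _ (lie_mem_right F _ I _ _ hxI))
    have hx1I : x1 ∈ I :=
      I.smul_mem _ (lie_mem_right F _ I _ _ (lie_mem_right F _ I _ _ hx0I))
    have hx0app : ∀ a b, (x0 : Matrix (Fin n) (Fin n) F) a b =
        if eOne q r a b then (x : Matrix (Fin n) (Fin n) F) a b else 0 := by
      intro a b
      have hrfl : (x0 : Matrix (Fin n) (Fin n) F) a b = (-(α q * α r)⁻¹) *
          ((⁅mSkew α q r, ⁅mSkew α q r, x⁆⁆ :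
            ↥(skewAdjointMatricesLieSubalgebra (Matrix.diagonal α))) :
            Matrix (Fin n) (Fin n) F) a b := rfl
      rw [hrfl, coe_lie_lie_mSkew α hα q r hqr x a b]
      by_cases hc : eOne q r a b
      · rw [if_pos hc, if_pos hc]
        have h1 := hα q
        have h2 := hα r
        field_simp
      · rw [if_neg hc, if_neg hc, mul_zero]
    have hx1app : ∀ a b, (x1 : Matrix (Fin n) (Fin n) F) a b =
        if eOne p r a b then (x0 : Matrix (Fin n) (Fin n) F) a b else 0 := by
      intro a b
      have hrfl : (x1 : Matrix (Fin n) (Fin n) F) a b = (-(α p * α r)⁻¹) *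
          ((⁅mSkew α p r, ⁅mSkew α p r, x0⁆⁆ :
            ↥(skewAdjointMatricesLieSubalgebra (Matrix.diagonal α))) :
            Matrix (Fin n) (Fin n) F) a b := rfl
      rw [hrfl, coe_lie_lie_mSkew α hα p r hpr x0 a b]
      by_cases hc : eOne p r a b
      · rw [if_pos hc, if_pos hc]
        have h1 := hα p
        have h2 := hα r
        field_simp
      · rw [if_neg hc, if_neg hc, mul_zero]
    have hx1pq : (x1 : Matrix (Fin n) (Fin n) F) p q = (x : Matrix (Fin n) (Fin n) F) p q := by
      have h1 : eOne p r p q :=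
        Or.inl ⟨Or.inl rfl, by rintro (h | h); exacts [hpq h.symm, hqr h]⟩
      have h2 : eOne q r p q :=
        Or.inr ⟨by rintro (h | h); exacts [hpq h, hpr h], Or.inl rfl⟩
      rw [hx1app, if_pos h1, hx0app, if_pos h2]
    have hshape : ∀ a b : Fin n, (x1 : Matrix (Fin n) (Fin n) F) a b ≠ 0 →
        (a = p ∧ b = q) ∨ (a = q ∧ b = p) ∨
        (a = r ∧ b ≠ p ∧ b ≠ q ∧ b ≠ r) ∨ (b = r ∧ a ≠ p ∧ a ≠ q ∧ a ≠ r) := by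
      intro a b hab
      rw [hx1app] at hab
      split_ifs at hab with h1
      · rw [hx0app] at hab
        split_ifs at hab with h2
        · clear hab
          rcases h1 with ⟨ha1, hb1⟩ | ⟨ha1, hb1⟩ <;> rcases h2 with ⟨ha2, hb2⟩ | ⟨ha2, hb2⟩
          · rcases ha1 with rfl | rfl
            · rcases ha2 with h | h
              · exact absurd h hpq
              · exact absurd h hpr
            · exact Or.inr (Or.inr (Or.inl ⟨rfl, fun h => hb1 (Or.inl h),
                fun h => hb2 (Or.inl h), fun h => hb1 (Or.inr h)⟩))
          · have hbq : b = q := by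
              rcases hb2 with h | h
              · exact h
              · exact absurd (Or.inr h) hb1
            have hap : a = p := by
              rcases ha1 with h | h
              · exact h
              · exact absurd (Or.inr h) ha2
            exact Or.inl ⟨hap, hbq⟩
          · have haq : a = q := by
              rcases ha2 with h | h
              · exact h
              · exact absurd (Or.inr h) ha1
            have hbp : b = p := by
              rcases hb1 with h | h
              · exact h
              · exact absurd (Or.inr h) hb2
            exact Or.inr (Or.inl ⟨haq, hbp⟩)
          · have hbr : b = r := by
              rcases hb1 with h | h
              · rcases hb2 with h' | h'
                · exact absurd (h.symm.trans h') hpq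
                · exact h'
              · exact h
            exact Or.inr (Or.inr (Or.inr ⟨hbr, fun h => ha1 (Or.inl h),
              fun h => ha2 (Or.inl h), fun h => ha1 (Or.inr h)⟩))
        · exact absurd rfl hab
      · exact absurd rfl hab
    have hcard : (Finset.univ.filter
        fun s => (x1 : Matrix (Fin n) (Fin n) F) r s ≠ 0).card ≤ n :=
      le_trans (Finset.card_filter_le _ _) (by simp)
    obtain ⟨y, hyI, hysupp, hypq⟩ := extract α hα hn4 I p q r hpq hpr hqr n x1 hx1I hshape hcard
    have hypq0 : (y : Matrix (Fin n) (Fin n) F) p q ≠ 0 := by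
      rw [hypq, hx1pq]; exact hpq0
    have hy : (y : Matrix (Fin n) (Fin n) F) =
        ((α q)⁻¹ * (y : Matrix (Fin n) (Fin n) F) p q) • skewM α p q := by
      ext a b
      rw [Matrix.smul_apply, skewM_apply, smul_eq_mul]
      by_cases h1 : a = p ∧ b = q
      · obtain ⟨rfl, rfl⟩ := h1
        rw [if_pos ⟨rfl, rfl⟩, if_neg (by rintro ⟨h, -⟩; exact hpq h.symm)]
        have h2 := hα b
        rw [sub_zero]
        field_simp
      · by_cases h2 : a = q ∧ b = p
        · obtain ⟨rfl, rfl⟩ := h2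
          rw [if_neg (by rintro ⟨h, -⟩; exact hpq h), if_pos ⟨rfl, rfl⟩]
          have h3 := hv_of_mem α y b a
          have h4 := hα a
          field_simp
          linear_combination h3
        · have hyab : (y : Matrix (Fin n) (Fin n) F) a b = 0 := by
            by_contra hab
            rcases hysupp a b hab with h | h
            · exact h1 h
            · exact h2 h
          rw [hyab,
            if_neg (by rintro ⟨hh1, hh2⟩; exact h1 ⟨hh1.symm, hh2.symm⟩),
            if_neg (by rintro ⟨hh1, hh2⟩; exact h2 ⟨hh1.symm, hh2.symm⟩)]
          ring
    have hc0 : (α q)⁻¹ * (y : Matrix (Fin n) (Fin n) F) p q ≠ 0 :=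
      mul_ne_zero (inv_ne_zero (hα q)) hypq0
    obtain ⟨c, hc0', hyc⟩ : ∃ c : F, c ≠ 0 ∧
        (y : Matrix (Fin n) (Fin n) F) = c • skewM α p q := ⟨_, hc0, hy⟩
    have hmpq : mSkew α p q ∈ I := by
      have hrepr : mSkew α p q = c⁻¹ • y := by
        apply Subtype.ext
        show skewM α p q = c⁻¹ • (y : Matrix (Fin n) (Fin n) F)
        rw [hyc, smul_smul, inv_mul_cancel₀ hc0', one_smul]
      rw [hrepr]
      exact I.smul_mem _ hyI
    exact ideal_eq_top α hα I (all_mSkew_mem α hα I p q hpq hmpq)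
  · -- non-abelian
    intro habel
    have h3 : (3 : ℕ) ≤ n := hn
    set i0 : Fin n := ⟨0, by omega⟩
    set i1 : Fin n := ⟨1, by omega⟩
    set i2 : Fin n := ⟨2, by omega⟩
    have h01 : i0 ≠ i1 := by simp [i0, i1, Fin.ext_iff]
    have h12 : i1 ≠ i2 := by simp [i1, i2, Fin.ext_iff]
    have h02 : i0 ≠ i2 := by simp [i0, i2, Fin.ext_iff]
    have hb : ⁅mSkew α i0 i1, mSkew α i1 i2⁆ = 0 := habel.trivial _ _
    rw [mSkew_bracket α i0 i1 i2 h01 h12 h02] at hb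
    have hent : ((α i1 • mSkew α i0 i2 :
        ↥(skewAdjointMatricesLieSubalgebra (Matrix.diagonal α))) :
        Matrix (Fin n) (Fin n) F) i0 i2 = 0 := by
      rw [hb]; rfl
    have hent2 : ((α i1 • mSkew α i0 i2 :
        ↥(skewAdjointMatricesLieSubalgebra (Matrix.diagonal α))) :
        Matrix (Fin n) (Fin n) F) i0 i2 = α i1 * α i2 := by
      show (α i1 • skewM α i0 i2) i0 i2 = α i1 * α i2
      rw [Matrix.smul_apply, skewM_apply, smul_eq_mul,
        if_pos ⟨rfl, rfl⟩, if_neg (by rintro ⟨h, -⟩; exact h02 h.symm)]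
      ring
    rw [hent2] at hent
    exact mul_ne_zero (hα i1) (hα i2) hent
end

section
/- Let J be a Jordan algebra with unit element 1 over a field F of characteristic ≠ 2. Then every triple derivation of J is a derivation of J; consequently TDer(J) = Der(J). -/
/-- Let `J` be a Jordan algebra with unit over a field of
characteristic `≠ 2`.  Then every triple derivation of `J` is a derivation;
consequently `TDer J = Der J`. -/
theorem tripleDerivation_eq_derivation_of_unital
    {F J : Type*} [Field F] (h2 : (2 : F) ≠ 0)
    [AddCommGroup J] [Module F J]
    (mul : J →ₗ[F] J →ₗ[F] J)
    (comm : ∀ x y : J, mul x y = mul y x)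
    (jordan : ∀ x y : J, mul (mul (mul x x) y) x = mul (mul x x) (mul x y))
    (one : J) (hone : ∀ x : J, mul one x = x) :
    (∀ D : Module.End F J,
      (∀ x y z : J, D (mul (mul x y) z)
          = mul (mul (D x) y) z + mul (mul x (D y)) z + mul (mul x y) (D z)) →
      ∀ x y : J, D (mul x y) = mul (D x) y + mul x (D y))
    ∧ {D : Module.End F J | ∀ x y z : J, D (mul (mul x y) z)
          = mul (mul (D x) y) z + mul (mul x (D y)) z + mul (mul x y) (D z)}
      = {D : Module.End F J | ∀ x y : J, D (mul x y) = mul (D x) y + mul x (D y)} := by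
  have hone' : ∀ x : J, mul x one = x := fun x => by rw [comm]; exact hone x
  have main : ∀ D : Module.End F J,
      (∀ x y z : J, D (mul (mul x y) z)
          = mul (mul (D x) y) z + mul (mul x (D y)) z + mul (mul x y) (D z)) →
      ∀ x y : J, D (mul x y) = mul (D x) y + mul x (D y) := by
    intro D hD
    -- First show D 1 = 0
    have h1 : D one = 0 := by
      have := hD one one one
      simp only [hone, hone'] at this
      have h2smul : (2 : F) • D one = 0 := by
        rw [two_smul]
        linear_combination (norm := abel) this.symm
      exact (smul_eq_zero.mp h2smul).resolve_left h2
    intro x y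
    have := hD x y one
    simp only [hone', h1, map_zero, add_zero] at this
    exact this
  refine ⟨main, Set.Subset.antisymm (fun D hD => main D hD) ?_⟩
  intro D hD x y z
  simp only [Set.mem_setOf_eq] at hD ⊢
  simp only [hD, map_add, LinearMap.add_apply]
end

section
/- Let F be a field of characteristic ≠ 2 and let J be the 2-dimensional commutative F-algebra with basis {e₁, e₂} and multiplication e₁∘e₁ = e₂∘e₂ = e₁ + e₂ and e₁∘e₂ = e₂∘e₁ = −e₁ − e₂. Then J is a Jordan algebra with (J∘J)∘J = 0, the linear map D₀ : J → J determined by D₀(e₁) = D₀(e₂) = e₁ is a triple derivation of J, but D₀ is not a derivation of J; in particular TDer(J) ≠ Der(J). -/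
/-- Let `F` be a field of characteristic `≠ 2` and `J` the
two-dimensional commutative algebra `F × F` with basis `e₁ = (1,0)`,
`e₂ = (0,1)` and multiplication `e₁∘e₁ = e₂∘e₂ = e₁ + e₂`,
`e₁∘e₂ = e₂∘e₁ = -e₁ - e₂`.  Then `J` is a Jordan algebra with
`(J∘J)∘J = 0`, the linear map `D₀` with `D₀ e₁ = D₀ e₂ = e₁` is a triple
derivation but not a derivation; in particular `TDer J ≠ Der J`. -/
theorem exists_tripleDerivation_not_derivation
    {F : Type*} [Field F] (h2 : (2 : F) ≠ 0)
    (mul : (F × F) →ₗ[F] (F × F) →ₗ[F] (F × F))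
    (h11 : mul ((1 : F), (0 : F)) ((1 : F), (0 : F)) = ((1 : F), (1 : F)))
    (h22 : mul ((0 : F), (1 : F)) ((0 : F), (1 : F)) = ((1 : F), (1 : F)))
    (h12 : mul ((1 : F), (0 : F)) ((0 : F), (1 : F)) = ((-1 : F), (-1 : F)))
    (h21 : mul ((0 : F), (1 : F)) ((1 : F), (0 : F)) = ((-1 : F), (-1 : F)))
    (D₀ : Module.End F (F × F))
    (hD₀₁ : D₀ ((1 : F), (0 : F)) = ((1 : F), (0 : F)))
    (hD₀₂ : D₀ ((0 : F), (1 : F)) = ((1 : F), (0 : F))) :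
    -- `J` is a Jordan algebra
    (∀ x y : F × F, mul x y = mul y x)
    ∧ (∀ x y : F × F, mul (mul (mul x x) y) x = mul (mul x x) (mul x y))
    -- with `(J∘J)∘J = 0`
    ∧ (∀ x y z : F × F, mul (mul x y) z = 0)
    -- `D₀` is a triple derivation of `J`
    ∧ (∀ x y z : F × F, D₀ (mul (mul x y) z)
        = mul (mul (D₀ x) y) z + mul (mul x (D₀ y)) z + mul (mul x y) (D₀ z))
    -- but `D₀` is not a derivation of `J`
    ∧ ¬ (∀ x y : F × F, D₀ (mul x y) = mul (D₀ x) y + mul x (D₀ y))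
    -- in particular `TDer J ≠ Der J`
    ∧ {D : Module.End F (F × F) | ∀ x y z : F × F, D (mul (mul x y) z)
          = mul (mul (D x) y) z + mul (mul x (D y)) z + mul (mul x y) (D z)}
        ≠ {D : Module.End F (F × F) |
            ∀ x y : F × F, D (mul x y) = mul (D x) y + mul x (D y)} := by
  have key : ∀ x y : F × F,
      mul x y = (((x.1 - x.2) * (y.1 - y.2)) • (((1 : F), (1 : F)) : F × F)) := by
    rintro ⟨a, b⟩ ⟨c, d⟩
    have hx : ((a, b) : F × F) = a • (((1 : F), (0 : F)) : F × F)
        + b • (((0 : F), (1 : F)) : F × F) := by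
      simp [Prod.ext_iff]
    have hy : ((c, d) : F × F) = c • (((1 : F), (0 : F)) : F × F)
        + d • (((0 : F), (1 : F)) : F × F) := by
      simp [Prod.ext_iff]
    rw [hx, hy]
    simp only [map_add, map_smul, LinearMap.add_apply, LinearMap.smul_apply,
      h11, h22, h12, h21]
    simp only [Prod.smul_mk, Prod.mk_add_mk, smul_eq_mul, Prod.ext_iff]
    constructor <;> ring
  have hzero : ∀ x y z : F × F, mul (mul x y) z = 0 := by
    intro x y z
    rw [key x y, key]
    simp
  refine ⟨?_, ?_, hzero, ?_, ?_, ?_⟩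
  · intro x y
    rw [key x y, key y x]; ring_nf
  · intro x y
    rw [hzero, hzero]
  · intro x y z
    rw [hzero, hzero, hzero, hzero, map_zero]
    simp
  · intro h
    have := h ((1 : F), (0 : F)) ((1 : F), (0 : F))
    rw [h11, hD₀₁, h11] at this
    have h1 : D₀ (((1 : F), (1 : F)) : F × F)
        = D₀ (((1 : F), (0 : F)) : F × F) + D₀ (((0 : F), (1 : F)) : F × F) := by
      rw [← map_add]; norm_num
    rw [h1, hD₀₁, hD₀₂] at this
    have h1' : (1 + 1 : F) = 0 := by simpa [Prod.ext_iff] using this.symm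
    exact h2 (by linear_combination h1')
  · intro h
    have hnotder : ¬ (∀ x y : F × F, D₀ (mul x y) = mul (D₀ x) y + mul x (D₀ y)) := by
      intro hd
      have := hd ((1 : F), (0 : F)) ((1 : F), (0 : F))
      rw [h11, hD₀₁, h11] at this
      have h1 : D₀ (((1 : F), (1 : F)) : F × F)
          = D₀ (((1 : F), (0 : F)) : F × F) + D₀ (((0 : F), (1 : F)) : F × F) := by
        rw [← map_add]; norm_num
      rw [h1, hD₀₁, hD₀₂] at this
      have h1' : (1 + 1 : F) = 0 := by simpa [Prod.ext_iff] using this.symm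
      exact h2 (by linear_combination h1')
    have hD₀mem : D₀ ∈ {D : Module.End F (F × F) | ∀ x y z : F × F, D (mul (mul x y) z)
          = mul (mul (D x) y) z + mul (mul x (D y)) z + mul (mul x y) (D z)} := by
      intro x y z
      rw [hzero, hzero, hzero, hzero, map_zero]
      simp
    rw [h] at hD₀mem
    exact hnotder hD₀mem
end

section
/- Let L be a Lie algebra over a field with center Z(L) = {0}, and suppose L = L₁ ⊕ L₂ is the internal direct sum of two Lie ideals L₁ and L₂. Then every triple derivation D of L satisfies D(L₁) ⊆ L₁ and D(L₂) ⊆ L₂. -/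
private lemma aux_center_zero {F L : Type*} [Field F] [LieRing L] [LieAlgebra F L]
    (hcenter : LieAlgebra.center F L = ⊥) {v : L} (hv : ∀ z : L, ⁅z, v⁆ = 0) : v = 0 := by
  have : v ∈ LieAlgebra.center F L := fun x => hv x
  rwa [hcenter, LieSubmodule.mem_bot] at this

private lemma aux_bracket_zero {F L : Type*} [Field F] [LieRing L] [LieAlgebra F L]
    {L₁ L₂ : LieIdeal F L} (hdisj : L₁ ⊓ L₂ = ⊥) {a b : L}
    (ha : a ∈ L₁) (hb : b ∈ L₂) : ⁅a, b⁆ = 0 := by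
  have h : ⁅a, b⁆ ∈ L₁ ⊓ L₂ := by
    constructor
    · exact lie_mem_left F L L₁ a b ha
    · exact lie_mem_right F L L₂ a b hb
  rwa [hdisj, LieSubmodule.mem_bot] at h

private lemma aux_one_side {F L : Type*} [Field F] [LieRing L] [LieAlgebra F L]
    (hcenter : LieAlgebra.center F L = ⊥)
    (L₁ L₂ : LieIdeal F L)
    (hdisj : L₁ ⊓ L₂ = ⊥)
    (hsum : L₁ ⊔ L₂ = ⊤)
    (D : L →ₗ[F] L)
    (hD : ∀ x y z : L, D ⁅⁅x, y⁆, z⁆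
        = ⁅⁅D x, y⁆, z⁆ + ⁅⁅x, D y⁆, z⁆ + ⁅⁅x, y⁆, D z⁆) :
    ∀ x ∈ L₁, D x ∈ L₁ := by
  intro x hx
  have hmem : ∀ w : L, w ∈ L₁ ⊔ L₂ := by
    intro w; rw [hsum]; trivial
  obtain ⟨u, hu, v, hv, huv⟩ := (LieSubmodule.mem_sup _ _ _).mp (hmem (D x))
  -- claim v = 0
  have hv0 : v = 0 := by
    apply aux_center_zero hcenter
    intro z
    obtain ⟨z₁, hz₁, z₂, hz₂, hz⟩ := (LieSubmodule.mem_sup _ _ _).mp (hmem z)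
    have h1 : ⁅z₁, v⁆ = 0 := aux_bracket_zero hdisj hz₁ hv
    have h2 : ⁅z₂, v⁆ = 0 := by
      apply aux_center_zero hcenter
      intro w
      obtain ⟨w₁, hw₁, w₂, hw₂, hw⟩ := (LieSubmodule.mem_sup _ _ _).mp (hmem w)
      have ht : ⁅z₂, v⁆ ∈ L₂ := lie_mem_right F L L₂ z₂ v hv
      have hA : ⁅w₁, ⁅z₂, v⁆⁆ = 0 := aux_bracket_zero hdisj hw₁ ht
      have hB : ⁅⁅z₂, v⁆, w₂⁆ = 0 := by
        have key := hD z₂ x w₂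
        have hz₂x : ⁅z₂, x⁆ = 0 := by
          rw [← lie_skew, aux_bracket_zero hdisj hx hz₂, neg_zero]
        obtain ⟨p, hp, q, hq, hpq⟩ := (LieSubmodule.mem_sup _ _ _).mp (hmem (D z₂))
        have hqx : ⁅q, x⁆ = 0 := by
          rw [← lie_skew, aux_bracket_zero hdisj hx hq, neg_zero]
        have hterm1 : ⁅⁅D z₂, x⁆, w₂⁆ = 0 := by
          rw [← hpq, add_lie, hqx, add_zero]
          exact aux_bracket_zero hdisj (lie_mem_left F L L₁ p x hp) hw₂
        have hterm2 : ⁅⁅z₂, D x⁆, w₂⁆ = ⁅⁅z₂, v⁆, w₂⁆ := by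
          rw [← huv, lie_add, add_lie]
          have : ⁅z₂, u⁆ = 0 := by
            rw [← lie_skew, aux_bracket_zero hdisj hu hz₂, neg_zero]
          rw [this, zero_lie, zero_add]
        rw [hz₂x, zero_lie, map_zero, zero_lie, hterm1, zero_add, hterm2, add_zero] at key
        exact key.symm
      have hwt : ⁅w₂, ⁅z₂, v⁆⁆ = 0 := by
        rw [← lie_skew, hB, neg_zero]
      rw [← hw, add_lie, hA, hwt, add_zero]
    rw [← hz, add_lie, h1, h2, add_zero]
  rw [← huv, hv0, add_zero]; exact hu

/-- Let `L` be a Lie algebra over a field with trivial center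
which is the internal direct sum of two Lie ideals `L₁ ⊕ L₂`.  Then every
triple derivation of `L` preserves `L₁` and `L₂`. -/
theorem lie_tripleDerivation_preserves_ideals
    {F L : Type*} [Field F] [LieRing L] [LieAlgebra F L]
    (hcenter : LieAlgebra.center F L = ⊥)
    (L₁ L₂ : LieIdeal F L)
    (hdisj : L₁ ⊓ L₂ = ⊥)
    (hsum : L₁ ⊔ L₂ = ⊤)
    (D : L →ₗ[F] L)
    (hD : ∀ x y z : L, D ⁅⁅x, y⁆, z⁆
        = ⁅⁅D x, y⁆, z⁆ + ⁅⁅x, D y⁆, z⁆ + ⁅⁅x, y⁆, D z⁆) :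
    (∀ x ∈ L₁, D x ∈ L₁) ∧ (∀ x ∈ L₂, D x ∈ L₂) := by
  refine ⟨aux_one_side hcenter L₁ L₂ hdisj hsum D hD,
    aux_one_side hcenter L₂ L₁ ?_ ?_ D hD⟩
  · rw [inf_comm]; exact hdisj
  · rw [sup_comm]; exact hsum
end

section
/- Let L be a Lie algebra over a field with center Z(L) = {0}, and suppose L = L₁ ⊕ L₂ is the internal direct sum of two Lie ideals L₁ and L₂. For i = 1, 2 let 𝔱ᵢ = {D ∈ TDer(L) | D(Lᵢ) ⊆ Lᵢ and D vanishes on the other summand}. Then each 𝔱ᵢ is a Lie ideal of the Lie algebra TDer(L), TDer(L) is the internal direct sum 𝔱₁ ⊕ 𝔱₂, and restriction to Lᵢ gives a Lie algebra isomorphism 𝔱ᵢ ≅ TDer(Lᵢ). -/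
attribute [local instance 100] LieRing.ofAssociativeRing

section Defs

variable (F : Type*) {L : Type*} [Field F] [LieRing L] [LieAlgebra F L]

/-- The triple derivations of a Lie algebra, as a Lie subalgebra of the
endomorphism algebra of the underlying module. -/
def tderSet : LieSubalgebra F (Module.End F L) where
  carrier := {D | ∀ x y z : L,
    D ⁅⁅x, y⁆, z⁆ = ⁅⁅D x, y⁆, z⁆ + ⁅⁅x, D y⁆, z⁆ + ⁅⁅x, y⁆, D z⁆}
  add_mem' := by
    intro D E hD hE
    simp only [Set.mem_setOf_eq] at hD hE ⊢
    intro x y z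
    simp only [LinearMap.add_apply, hD, hE, add_lie, lie_add]
    abel
  zero_mem' := by
    simp only [Set.mem_setOf_eq]
    intro x y z; simp
  smul_mem' := by
    intro c D hD
    simp only [Set.mem_setOf_eq] at hD ⊢
    intro x y z
    simp only [LinearMap.smul_apply, hD, smul_lie, lie_smul, smul_add]
  lie_mem' := by
    intro D E hD hE
    simp only [Set.mem_setOf_eq] at hD hE ⊢
    intro x y z
    simp only [LieRing.of_associative_ring_bracket, LinearMap.sub_apply,
      Module.End.mul_apply, hD, hE, map_add, map_sub, LinearMap.add_apply,
      LinearMap.sub_apply, add_lie, lie_add, sub_lie, lie_sub]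
    abel

/-- The triple derivations of a Lie algebra preserving the Lie ideal `L₁` and
vanishing on the Lie ideal `L₂`, as a Lie subalgebra of the endomorphism
algebra. -/
def tderPart (L₁ L₂ : LieIdeal F L) : LieSubalgebra F (Module.End F L) where
  carrier := {D | (∀ x y z : L,
      D ⁅⁅x, y⁆, z⁆ = ⁅⁅D x, y⁆, z⁆ + ⁅⁅x, D y⁆, z⁆ + ⁅⁅x, y⁆, D z⁆)
    ∧ (∀ a ∈ L₁, D a ∈ L₁) ∧ (∀ a ∈ L₂, D a = 0)}
  add_mem' := by
    rintro D E ⟨hD, hD1, hD2⟩ ⟨hE, hE1, hE2⟩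
    refine ⟨(tderSet F).add_mem hD hE, fun a ha => ?_, fun a ha => ?_⟩
    · simpa using L₁.add_mem (hD1 a ha) (hE1 a ha)
    · simp [hD2 a ha, hE2 a ha]
  zero_mem' := by
    exact ⟨(tderSet F).zero_mem, by simp, by simp⟩
  smul_mem' := by
    rintro c D ⟨hD, hD1, hD2⟩
    refine ⟨(tderSet F).smul_mem c hD, fun a ha => ?_, fun a ha => ?_⟩
    · simpa using L₁.smul_mem c (hD1 a ha)
    · simp [hD2 a ha]
  lie_mem' := by
    rintro D E ⟨hD, hD1, hD2⟩ ⟨hE, hE1, hE2⟩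
    refine ⟨(tderSet F).lie_mem hD hE, fun a ha => ?_, fun a ha => ?_⟩
    · simpa [LieRing.of_associative_ring_bracket] using
        L₁.sub_mem (hD1 _ (hE1 a ha)) (hE1 _ (hD1 a ha))
    · simp [LieRing.of_associative_ring_bracket, hD2 a ha, hE2 a ha,
        hD2 (E a) (by rw [hE2 a ha]; exact L₂.zero_mem),
        hE2 (D a) (by rw [hD2 a ha]; exact L₂.zero_mem)]

end Defs


section Aux

variable {F L : Type*} [Field F] [LieRing L] [LieAlgebra F L]

theorem aux_hz (L₁ L₂ : LieIdeal F L) (hdisj : L₁ ⊓ L₂ = ⊥) :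
    ∀ a ∈ L₁, ∀ b ∈ L₂, ⁅a, b⁆ = (0 : L) := by
  intro a ha b hb
  have hm1 : ⁅a, b⁆ ∈ L₁ := by
    rw [← lie_skew]
    exact neg_mem (L₁.lie_mem ha)
  have hm2 : ⁅a, b⁆ ∈ L₂ := L₂.lie_mem hb
  have h : ⁅a, b⁆ ∈ L₁ ⊓ L₂ := (LieSubmodule.mem_inf _ _ _).mpr ⟨hm1, hm2⟩
  rw [hdisj, LieSubmodule.mem_bot] at h
  exact h

theorem aux_hs (L₁ L₂ : LieIdeal F L) (hsum : L₁ ⊔ L₂ = ⊤) :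
    ∀ x : L, ∃ a ∈ L₁, ∃ b ∈ L₂, a + b = x := by
  intro x
  have : x ∈ L₁ ⊔ L₂ := by rw [hsum]; trivial
  exact (LieSubmodule.mem_sup _ _ _).mp this

/-- Every triple derivation preserves each ideal of a direct-sum decomposition,
when the center is trivial. -/
theorem aux_preserve (hcenter : LieAlgebra.center F L = ⊥)
    (L₁ L₂ : LieIdeal F L)
    (hz : ∀ a ∈ L₁, ∀ b ∈ L₂, ⁅a, b⁆ = (0 : L))
    (hs : ∀ x : L, ∃ a ∈ L₁, ∃ b ∈ L₂, a + b = x)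
    (D : Module.End F L) (hD : D ∈ tderSet F) :
    ∀ a ∈ L₁, D a ∈ L₁ := by
  intro a ha
  obtain ⟨u, hu, v, hv, huv⟩ := hs (D a)
  have hvb : ∀ b ∈ L₂, ⁅v, b⁆ = 0 := by
    intro b hb
    have hmem : ⁅v, b⁆ ∈ LieAlgebra.center F L := by
      rw [LieModule.mem_maxTrivSubmodule]
      intro c
      obtain ⟨c₁, hc₁, c₂, hc₂, hc⟩ := hs c
      have h1 : ⁅c₁, ⁅v, b⁆⁆ = 0 := hz c₁ hc₁ _ (L₂.lie_mem hb)
      have h2 : ⁅⁅D a, b⁆, c₂⁆ = 0 := by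
        have key := hD a b c₂
        obtain ⟨w₁, hw₁, w₂, hw₂, hw⟩ := hs (D b)
        have e2 : ⁅a, D b⁆ = ⁅a, w₁⁆ := by
          rw [← hw, lie_add, hz a ha w₂ hw₂, add_zero]
        have e3 : ⁅⁅a, D b⁆, c₂⁆ = 0 := by
          rw [e2]; exact hz _ (L₁.lie_mem hw₁) c₂ hc₂
        rw [hz a ha b hb, e3] at key
        simpa using key.symm
      have h2' : ⁅c₂, ⁅v, b⁆⁆ = 0 := by
        have e : ⁅D a, b⁆ = ⁅v, b⁆ := by
          rw [← huv, add_lie, hz u hu b hb, zero_add]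
        rw [← e, ← lie_skew, h2, neg_zero]
      rw [← hc, add_lie, h1, h2', add_zero]
    rw [hcenter, LieSubmodule.mem_bot] at hmem
    exact hmem
  have hv0 : v = 0 := by
    have hmem : v ∈ LieAlgebra.center F L := by
      rw [LieModule.mem_maxTrivSubmodule]
      intro c
      obtain ⟨c₁, hc₁, c₂, hc₂, hc⟩ := hs c
      have h1 : ⁅c₁, v⁆ = 0 := hz c₁ hc₁ v hv
      have h2 : ⁅c₂, v⁆ = 0 := by
        rw [← lie_skew, hvb c₂ hc₂, neg_zero]
      rw [← hc, add_lie, h1, h2, add_zero]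
    rw [hcenter, LieSubmodule.mem_bot] at hmem
    exact hmem
  rw [← huv, hv0, add_zero]
  exact hu

theorem aux_coe_bracket (I : LieIdeal F L) (x y : ↥I) :
    ((⁅x, y⁆ : ↥I) : L) = ⁅(x : L), (y : L)⁆ := rfl

/-- Membership criterion for `tderPart`. -/
theorem aux_mem_tderPart (L₁ L₂ : LieIdeal F L)
    (hz : ∀ a ∈ L₁, ∀ b ∈ L₂, ⁅a, b⁆ = (0 : L))
    (hs : ∀ x : L, ∃ a ∈ L₁, ∃ b ∈ L₂, a + b = x)
    (E : Module.End F L)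
    (hE1 : ∀ x : L, E x ∈ L₁)
    (hE2 : ∀ b ∈ L₂, E b = 0)
    (hE3 : ∀ x y z : L, x ∈ L₁ → y ∈ L₁ → z ∈ L₁ →
      E ⁅⁅x, y⁆, z⁆ = ⁅⁅E x, y⁆, z⁆ + ⁅⁅x, E y⁆, z⁆ + ⁅⁅x, y⁆, E z⁆) :
    E ∈ tderPart F L₁ L₂ := by
  have hz' : ∀ b ∈ L₂, ∀ a ∈ L₁, ⁅b, a⁆ = (0 : L) := by
    intro b hb a ha
    rw [← lie_skew, hz a ha b hb, neg_zero]
  refine ⟨?_, fun a _ => hE1 a, hE2⟩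
  intro x y z
  obtain ⟨x₁, hx₁, x₂, hx₂, hx⟩ := hs x
  obtain ⟨y₁, hy₁, y₂, hy₂, hy⟩ := hs y
  obtain ⟨z₁, hz₁, z₂, hz₂, hzz⟩ := hs z
  have hbr : ⁅⁅x, y⁆, z⁆ = ⁅⁅x₁, y₁⁆, z₁⁆ + ⁅⁅x₂, y₂⁆, z₂⁆ := by
    rw [← hx, ← hy, ← hzz]
    simp only [add_lie, lie_add, hz x₁ hx₁ y₂ hy₂, hz' x₂ hx₂ y₁ hy₁,
      hz _ (L₁.lie_mem hy₁) z₂ hz₂, hz' _ (L₂.lie_mem hy₂) z₁ hz₁,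
      zero_lie, lie_zero, add_zero, zero_add]
  have hEx : E x = E x₁ := by rw [← hx, map_add, hE2 x₂ hx₂, add_zero]
  have hEy : E y = E y₁ := by rw [← hy, map_add, hE2 y₂ hy₂, add_zero]
  have hEz : E z = E z₁ := by rw [← hzz, map_add, hE2 z₂ hz₂, add_zero]
  have hL : E ⁅⁅x, y⁆, z⁆ = E ⁅⁅x₁, y₁⁆, z₁⁆ := by
    rw [hbr, map_add, hE2 _ (L₂.lie_mem hz₂), add_zero]
  have hR1 : ⁅⁅E x, y⁆, z⁆ = ⁅⁅E x₁, y₁⁆, z₁⁆ := by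
    rw [hEx, ← hy, ← hzz]
    simp only [lie_add, hz _ (hE1 x₁) y₂ hy₂,
      hz _ (L₁.lie_mem hy₁) z₂ hz₂, add_zero]
  have hR2 : ⁅⁅x, E y⁆, z⁆ = ⁅⁅x₁, E y₁⁆, z₁⁆ := by
    rw [hEy, ← hx, ← hzz]
    simp only [add_lie, lie_add, hz' x₂ hx₂ _ (hE1 y₁),
      hz _ (L₁.lie_mem (hE1 y₁)) z₂ hz₂, add_zero]
  have hR3 : ⁅⁅x, y⁆, E z⁆ = ⁅⁅x₁, y₁⁆, E z₁⁆ := by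
    rw [hEz, ← hx, ← hy]
    simp only [add_lie, lie_add, hz x₁ hx₁ y₂ hy₂, hz' x₂ hx₂ y₁ hy₁,
      hz' _ (L₂.lie_mem hy₂) _ (hE1 z₁), zero_lie, lie_zero, add_zero, zero_add]
  rw [hL, hE3 x₁ y₁ z₁ hx₁ hy₁ hz₁, hR1, hR2, hR3]

end Aux

section Iso

variable {F L : Type*} [Field F] [LieRing L] [LieAlgebra F L]

set_option maxHeartbeats 1000000 in
set_option synthInstance.maxHeartbeats 1000000 in
theorem aux_iso (hcenter : LieAlgebra.center F L = ⊥)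
    (L₁ L₂ : LieIdeal F L) (hdisj : L₁ ⊓ L₂ = ⊥) (hsum : L₁ ⊔ L₂ = ⊤) :
    ∃ e : ↥(tderPart F L₁ L₂) ≃ₗ⁅F⁆ ↥(tderSet F (L := ↥L₁)),
      ∀ D : ↥(tderPart F L₁ L₂), ∀ x : L₁,
        (((e D : Module.End F L₁) x : L₁) : L) = (D : Module.End F L) (x : L) := by
  classical
  have hz := aux_hz L₁ L₂ hdisj
  have hs := aux_hs L₁ L₂ hsum
  have hc : IsCompl L₁.toSubmodule L₂.toSubmodule := by
    constructor
    · rw [disjoint_iff, ← LieSubmodule.inf_toSubmodule, hdisj,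
        LieSubmodule.bot_toSubmodule]
    · rw [codisjoint_iff, ← LieSubmodule.sup_toSubmodule, hsum,
        LieSubmodule.top_toSubmodule]
  set π₁ := Submodule.projectionOnto _ _ hc with hπ₁def
  have hπa : ∀ a (ha : a ∈ L₁), π₁ a = ⟨a, ha⟩ := fun a ha =>
    Submodule.projectionOnto_apply_left hc ⟨a, ha⟩
  have hπb : ∀ b ∈ L₂, π₁ b = 0 := fun b hb =>
    Submodule.projectionOnto_apply_of_mem_right hc hb
  -- the restriction Lie algebra homomorphism
  have hpres : ∀ D : ↥(tderPart F L₁ L₂), ∀ a ∈ L₁.toSubmodule,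
      (D : Module.End F L) a ∈ L₁.toSubmodule := fun D a ha => D.2.2.1 a ha
  have hmem : ∀ D : ↥(tderPart F L₁ L₂),
      (D : Module.End F L).restrict (hpres D) ∈ tderSet F (L := ↥L₁) := by
    intro D X Y Z
    refine Subtype.ext ?_
    have hD := D.2.1
    simp only [LieSubmodule.coe_add, aux_coe_bracket, LinearMap.restrict_coe_apply]
    exact hD X Y Z
  set f : ↥(tderPart F L₁ L₂) →ₗ⁅F⁆ ↥(tderSet F (L := ↥L₁)) :=
    { toFun := fun D => ⟨(D : Module.End F L).restrict (hpres D), hmem D⟩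
      map_add' := fun D E => rfl
      map_smul' := fun c D => rfl
      map_lie' := by intro D E; rfl } with hfdef
  have hbij : Function.Bijective f := by
    constructor
    · intro D E h
      have h' : ∀ a (ha : a ∈ L₁), (D : Module.End F L) a = (E : Module.End F L) a := by
        intro a ha
        have h1 := congrArg (fun g : ↥(tderSet F (L := ↥L₁)) =>
          (((g : Module.End F ↥L₁) ⟨a, ha⟩ : ↥L₁) : L)) h
        exact h1
      refine Subtype.ext (LinearMap.ext fun x => ?_)
      obtain ⟨a, ha, b, hb, hab⟩ := hs x
      rw [← hab, map_add, map_add, h' a ha, D.2.2.2 b hb, E.2.2.2 b hb]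
    · intro δ
      set E : Module.End F L :=
        L₁.toSubmodule.subtype ∘ₗ (δ : Module.End F ↥L₁) ∘ₗ π₁ with hEdef
      have hEa : ∀ a (ha : a ∈ L₁), E a = ((δ : Module.End F ↥L₁) ⟨a, ha⟩ : L) := by
        intro a ha
        simp only [hEdef, LinearMap.coe_comp, Function.comp_apply, Submodule.coe_subtype]
        exact congrArg (fun w : ↥L₁.toSubmodule => ((δ : Module.End F ↥L₁) w : L)) (hπa a ha)
      have hE1 : ∀ x : L, E x ∈ L₁ := fun x => ((δ : Module.End F ↥L₁) (π₁ x)).2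
      have hE2 : ∀ b ∈ L₂, E b = 0 := by
        intro b hb
        simp only [hEdef, LinearMap.coe_comp, Function.comp_apply, Submodule.coe_subtype]
        have h0 := congrArg (fun w : ↥L₁.toSubmodule => ((δ : Module.End F ↥L₁) w : L)) (hπb b hb)
        simpa using h0
      have hEmem : E ∈ tderPart F L₁ L₂ := by
        refine aux_mem_tderPart L₁ L₂ hz hs E hE1 hE2 ?_
        intro x y z hx hy hzz
        have hδ := δ.2
        have key := hδ ⟨x, hx⟩ ⟨y, hy⟩ ⟨z, hzz⟩
        have hbr : (⁅⁅(⟨x, hx⟩ : ↥L₁), (⟨y, hy⟩ : ↥L₁)⁆, (⟨z, hzz⟩ : ↥L₁)⁆ : ↥L₁)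
            = ⟨⁅⁅x, y⁆, z⁆, L₁.lie_mem hzz⟩ := rfl
        rw [hEa _ (L₁.lie_mem hzz : ⁅⁅x, y⁆, z⁆ ∈ L₁), hEa x hx, hEa y hy, hEa z hzz]
        have := congrArg (fun w : ↥L₁ => (w : L)) key
        simp only [hbr, LieSubmodule.coe_add, aux_coe_bracket] at this
        exact this
      refine ⟨⟨E, hEmem⟩, ?_⟩
      refine Subtype.ext (LinearMap.ext fun X => Subtype.ext ?_)
      show ((⟨E, hEmem⟩ : ↥(tderPart F L₁ L₂)) : Module.End F L) (X : L) = _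
      rw [hEa (X : L) X.2]
  refine ⟨LieEquiv.ofBijective f hbij, fun D x => ?_⟩
  rfl

end Iso

set_option maxHeartbeats 1000000 in
set_option synthInstance.maxHeartbeats 1000000 in
/-- Let `L` be a Lie algebra over a field with trivial center
which is the internal direct sum of two Lie ideals `L₁ ⊕ L₂`.  For `i = 1, 2`
let `𝔱ᵢ` be the set of triple derivations of `L` preserving `Lᵢ` and vanishing
on the other summand.  Then each `𝔱ᵢ` is a Lie ideal of `TDer L`, `TDer L` is
the internal direct sum `𝔱₁ ⊕ 𝔱₂`, and restriction to `Lᵢ` gives a Lie algebra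
isomorphism `𝔱ᵢ ≅ TDer Lᵢ`. -/
theorem lie_tripleDerivation_algebra_decomposition
    {F L : Type*} [Field F] [LieRing L] [LieAlgebra F L]
    (hcenter : LieAlgebra.center F L = ⊥)
    (L₁ L₂ : LieIdeal F L)
    (hdisj : L₁ ⊓ L₂ = ⊥)
    (hsum : L₁ ⊔ L₂ = ⊤) :
    -- `𝔱₁` and `𝔱₂` are Lie ideals of `TDer L`
    (∀ D ∈ tderSet F (L := L), ∀ E ∈ tderPart F L₁ L₂, ⁅D, E⁆ ∈ tderPart F L₁ L₂)
    ∧ (∀ D ∈ tderSet F (L := L), ∀ E ∈ tderPart F L₂ L₁, ⁅D, E⁆ ∈ tderPart F L₂ L₁)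
    -- `TDer L = 𝔱₁ ⊕ 𝔱₂` (internal direct sum)
    ∧ (tderPart F L₁ L₂).toSubmodule ⊓ (tderPart F L₂ L₁).toSubmodule = ⊥
    ∧ (tderPart F L₁ L₂).toSubmodule ⊔ (tderPart F L₂ L₁).toSubmodule
        = (tderSet F (L := L)).toSubmodule
    -- restriction to `L₁` is a Lie algebra isomorphism `𝔱₁ ≅ TDer L₁`
    ∧ (∃ e : ↥(tderPart F L₁ L₂) ≃ₗ⁅F⁆ ↥(tderSet F (L := ↥L₁)),
        ∀ D : ↥(tderPart F L₁ L₂), ∀ x : L₁,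
          (((e D : Module.End F L₁) x : L₁) : L) = (D : Module.End F L) (x : L))
    -- restriction to `L₂` is a Lie algebra isomorphism `𝔱₂ ≅ TDer L₂`
    ∧ (∃ e : ↥(tderPart F L₂ L₁) ≃ₗ⁅F⁆ ↥(tderSet F (L := ↥L₂)),
        ∀ D : ↥(tderPart F L₂ L₁), ∀ x : L₂,
          (((e D : Module.End F L₂) x : L₂) : L) = (D : Module.End F L) (x : L)) := by
  classical
  have hdisj' : L₂ ⊓ L₁ = ⊥ := by rw [inf_comm]; exact hdisj
  have hsum' : L₂ ⊔ L₁ = ⊤ := by rw [sup_comm]; exact hsum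
  have hz := aux_hz L₁ L₂ hdisj
  have hz' := aux_hz L₂ L₁ hdisj'
  have hs := aux_hs L₁ L₂ hsum
  have hs' := aux_hs L₂ L₁ hsum'
  have pres₁ := aux_preserve hcenter L₁ L₂ hz hs
  have pres₂ := aux_preserve hcenter L₂ L₁ hz' hs'
  -- the ideal property, proved generically
  have key : ∀ M₁ M₂ : LieIdeal F L,
      (∀ D ∈ tderSet F (L := L), ∀ a ∈ M₁, D a ∈ M₁) →
      (∀ D ∈ tderSet F (L := L), ∀ a ∈ M₂, D a ∈ M₂) →
      ∀ D ∈ tderSet F (L := L), ∀ E ∈ tderPart F M₁ M₂,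
        ⁅D, E⁆ ∈ tderPart F M₁ M₂ := by
    intro M₁ M₂ p1 p2 D hD E hE
    obtain ⟨hEt, hE1, hE2⟩ := hE
    refine ⟨(tderSet F).lie_mem hD hEt, ?_, ?_⟩
    · intro a ha
      have h1 : D (E a) ∈ M₁ := p1 D hD _ (hE1 a ha)
      have h2 : E (D a) ∈ M₁ := hE1 _ (p1 D hD a ha)
      simpa [LieRing.of_associative_ring_bracket] using sub_mem h1 h2
    · intro a ha
      simp [LieRing.of_associative_ring_bracket, hE2 a ha,
        hE2 (D a) (p2 D hD a ha)]
  refine ⟨key L₁ L₂ pres₁ pres₂, key L₂ L₁ pres₂ pres₁, ?_, ?_, ?_, ?_⟩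
  · -- trivial intersection
    rw [eq_bot_iff]
    intro D hD
    rw [Submodule.mem_inf] at hD
    obtain ⟨h1, h2⟩ := hD
    have h1' : D ∈ tderPart F L₁ L₂ := h1
    have h2' : D ∈ tderPart F L₂ L₁ := h2
    obtain ⟨-, -, k2⟩ := h1'
    obtain ⟨-, -, k1⟩ := h2'
    rw [Submodule.mem_bot]
    apply LinearMap.ext
    intro x
    obtain ⟨a, ha, b, hb, hab⟩ := hs x
    rw [← hab, map_add, k1 a ha, k2 b hb, add_zero]
    simp
  · -- sum
    have hc : IsCompl L₁.toSubmodule L₂.toSubmodule := by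
      constructor
      · rw [disjoint_iff, ← LieSubmodule.inf_toSubmodule, hdisj,
          LieSubmodule.bot_toSubmodule]
      · rw [codisjoint_iff, ← LieSubmodule.sup_toSubmodule, hsum,
          LieSubmodule.top_toSubmodule]
    set π₁ := Submodule.projectionOnto _ _ hc with hπ₁def
    set π₂ := Submodule.projectionOnto _ _ hc.symm with hπ₂def
    have hπa : ∀ a (ha : a ∈ L₁), π₁ a = ⟨a, ha⟩ := fun a ha =>
      Submodule.projectionOnto_apply_left hc ⟨a, ha⟩
    have hπb : ∀ b ∈ L₂, π₁ b = 0 := fun b hb =>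
      Submodule.projectionOnto_apply_of_mem_right hc hb
    have hπ'a : ∀ a (ha : a ∈ L₂), π₂ a = ⟨a, ha⟩ := fun a ha =>
      Submodule.projectionOnto_apply_left hc.symm ⟨a, ha⟩
    have hπ'b : ∀ b ∈ L₁, π₂ b = 0 := fun b hb =>
      Submodule.projectionOnto_apply_of_mem_right hc.symm hb
    apply le_antisymm
    · refine sup_le ?_ ?_
      · intro D hD
        exact hD.1
      · intro D hD
        exact hD.1
    · intro D hD
      have hDt : D ∈ tderSet F := hD
      set D₁ : Module.End F L := D ∘ₗ (L₁.toSubmodule.subtype ∘ₗ π₁) with hD₁def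
      set D₂ : Module.End F L := D ∘ₗ (L₂.toSubmodule.subtype ∘ₗ π₂) with hD₂def
      have fix₁ : ∀ a (ha : a ∈ L₁), D₁ a = D a := by
        intro a ha
        simp only [hD₁def, LinearMap.coe_comp, Function.comp_apply,
          Submodule.coe_subtype]
        exact congrArg (fun w : ↥L₁.toSubmodule => D (w : L)) (hπa a ha)
      have fix₂ : ∀ a (ha : a ∈ L₂), D₂ a = D a := by
        intro a ha
        simp only [hD₂def, LinearMap.coe_comp, Function.comp_apply,
          Submodule.coe_subtype]
        exact congrArg (fun w : ↥L₂.toSubmodule => D (w : L)) (hπ'a a ha)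
      have mem₁ : D₁ ∈ tderPart F L₁ L₂ := by
        refine aux_mem_tderPart L₁ L₂ hz hs D₁ ?_ ?_ ?_
        · intro x
          exact pres₁ D hDt _ (π₁ x).2
        · intro b hb
          simp only [hD₁def, LinearMap.coe_comp, Function.comp_apply,
            Submodule.coe_subtype]
          have h0 := congrArg (fun w : ↥L₁.toSubmodule => D (w : L)) (hπb b hb)
          simpa using h0
        · intro x y z hx hy hzz
          rw [fix₁ _ (L₁.lie_mem hzz : ⁅⁅x, y⁆, z⁆ ∈ L₁), fix₁ x hx, fix₁ y hy,
            fix₁ z hzz]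
          exact hDt x y z
      have mem₂ : D₂ ∈ tderPart F L₂ L₁ := by
        refine aux_mem_tderPart L₂ L₁ hz' hs' D₂ ?_ ?_ ?_
        · intro x
          exact pres₂ D hDt _ (π₂ x).2
        · intro b hb
          simp only [hD₂def, LinearMap.coe_comp, Function.comp_apply,
            Submodule.coe_subtype]
          have h0 := congrArg (fun w : ↥L₂.toSubmodule => D (w : L)) (hπ'b b hb)
          simpa using h0
        · intro x y z hx hy hzz
          rw [fix₂ _ (L₂.lie_mem hzz : ⁅⁅x, y⁆, z⁆ ∈ L₂), fix₂ x hx, fix₂ y hy,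
            fix₂ z hzz]
          exact hDt x y z
      refine Submodule.mem_sup.mpr ⟨D₁, mem₁, D₂, mem₂, ?_⟩
      apply LinearMap.ext
      intro x
      have hx : (π₁ x : L) + (π₂ x : L) = x := Submodule.projection_add_projection_eq_self hc x
      calc (D₁ + D₂) x = D ((π₁ x : L) + (π₂ x : L)) := by
            simp [hD₁def, hD₂def]
        _ = D x := by rw [hx]
  · exact aux_iso hcenter L₁ L₂ hdisj hsum
  · exact aux_iso hcenter L₂ L₁ hdisj' hsum'
end
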